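/- arXiv:2501.10897 — 2 statements merged into one kernel-verified Lean document; each statement's English description precedes it below -/
import Mathlib

section
/- In the discrete latent bipartite graphical model, suppose J ≥ 2K, ν(a) > 0 for all a ∈ {0,…,H−1}^K, Assumptions 1 and 2 hold, and the first 2K rows of G consist of two copies of the identity: co(j) = {j} for 1 ≤ j ≤ K and co(j) = {j − K} for K+1 ≤ j ≤ 2K. Then for every k ∈ [K] and every j ∈ {2K+1,…,J} with |co(j)| ≥ 2: rank([T]_{([K]∖{k}) ∪ {j}, {K+1,…,2K}}) > H^{K−1} if and only if k ∈ co(j). -/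
open Matrix MeasureTheory

namespace LBGM

/-- The set of latent variables connected to observed variable `j`. -/
def co {J K : ℕ} (G : Fin J → Fin K → Bool) (j : Fin J) : Finset (Fin K) :=
  Finset.univ.filter (fun k => G j k = true)

/-- The set of latent variables connected to some observed variable in `S`. -/
def coS {J K : ℕ} (G : Fin J → Fin K → Bool) (S : Finset (Fin J)) : Finset (Fin K) :=
  S.biUnion (co G)

/-- `θ j` depends only on the latent coordinates in `co G j`. -/
def DependsOnlyOnCo {J K V H : ℕ} (G : Fin J → Fin K → Bool)
    (θ : Fin J → (Fin K → Fin H) → Fin V → ℝ) : Prop :=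
  ∀ (j : Fin J) (a a' : Fin K → Fin H), (∀ k ∈ co G j, a k = a' k) → θ j a = θ j a'

/-- Every `θ j (· | a)` is a probability vector on `{0,…,V-1}`. -/
def IsCPT {J K V H : ℕ} (θ : Fin J → (Fin K → Fin H) → Fin V → ℝ) : Prop :=
  ∀ j a, (∀ v, 0 ≤ θ j a v) ∧ (∑ v, θ j a v) = 1

/-- `ν` is a probability mass function on `{0,…,H-1}^K`. -/
def IsPMF {K H : ℕ} (ν : (Fin K → Fin H) → ℝ) : Prop :=
  (∀ a, 0 ≤ ν a) ∧ (∑ a, ν a) = 1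

/-- Induced joint pmf of the observed vector `Y`. -/
noncomputable def jointP {J K V H : ℕ} (ν : (Fin K → Fin H) → ℝ)
    (θ : Fin J → (Fin K → Fin H) → Fin V → ℝ) (y : Fin J → Fin V) : ℝ :=
  ∑ a : Fin K → Fin H, ν a * ∏ j, θ j a (y j)

/-- Extend a latent configuration on `S` to all of `[K]`, filling in `0` elsewhere. -/
def extendA {K H : ℕ} [NeZero H] (S : Finset (Fin K)) (a : {k // k ∈ S} → Fin H) :
    Fin K → Fin H :=
  fun k => if h : k ∈ S then a ⟨k, h⟩ else 0

/-- Conditional probability table `P(Y_M | A_S)`. -/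
noncomputable def cpt {J K V H : ℕ} [NeZero H]
    (θ : Fin J → (Fin K → Fin H) → Fin V → ℝ)
    (M : Finset (Fin J)) (S : Finset (Fin K)) :
    Matrix ({j // j ∈ M} → Fin V) ({k // k ∈ S} → Fin H) ℝ :=
  Matrix.of fun y a => ∏ j : {j // j ∈ M}, θ j.1 (extendA S a) (y j)

/-- Unfolded tensor `[T]_{S₁,S₂}`: the matrix of joint marginal probabilities of
`Y_{S₁}` and `Y_{S₂}`. -/
noncomputable def unfoldT {J K V H : ℕ} (ν : (Fin K → Fin H) → ℝ)
    (θ : Fin J → (Fin K → Fin H) → Fin V → ℝ) (S₁ S₂ : Finset (Fin J)) :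
    Matrix ({j // j ∈ S₁} → Fin V) ({j // j ∈ S₂} → Fin V) ℝ :=
  Matrix.of fun r c => ∑ y : Fin J → Fin V,
    if (∀ j : {j // j ∈ S₁}, y j.1 = r j) ∧ (∀ j : {j // j ∈ S₂}, y j.1 = c j)
      then jointP ν θ y else 0

/-- `[T]_{S,:} = [T]_{S, [J]∖S}`. -/
noncomputable def unfoldRow {J K V H : ℕ} (ν : (Fin K → Fin H) → ℝ)
    (θ : Fin J → (Fin K → Fin H) → Fin V → ℝ) (S : Finset (Fin J)) :
    Matrix ({j // j ∈ S} → Fin V) ({j // j ∈ Sᶜ} → Fin V) ℝ :=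
  unfoldT ν θ S Sᶜ

/-- Marginal pmf of `Y_S`. -/
noncomputable def marginalP {J K V H : ℕ} (ν : (Fin K → Fin H) → ℝ)
    (θ : Fin J → (Fin K → Fin H) → Fin V → ℝ) (S : Finset (Fin J))
    (r : {j // j ∈ S} → Fin V) : ℝ :=
  ∑ y : Fin J → Fin V, if ∀ j : {j // j ∈ S}, y j.1 = r j then jointP ν θ y else 0

/-- Assumption 1: single-parent CPTs have full column rank `H`. -/
def Assumption1 {J K V H : ℕ} [NeZero H] (G : Fin J → Fin K → Bool)
    (θ : Fin J → (Fin K → Fin H) → Fin V → ℝ) : Prop :=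
  ∀ j : Fin J, (co G j).card = 1 → (cpt θ {j} (co G j)).rank = H

/-- Assumption 2: each connected latent variable makes a difference. -/
def Assumption2 {J K V H : ℕ} (G : Fin J → Fin K → Bool)
    (θ : Fin J → (Fin K → Fin H) → Fin V → ℝ) : Prop :=
  ∀ j : Fin J, ∀ k ∈ co G j, ∃ a : Fin K → Fin H, ∃ h h' : Fin H,
    θ j (Function.update a k h) ≠ θ j (Function.update a k h')

/-- Pure-child graph condition: every observed variable has a parent and every
latent variable has at least two pure children. -/
def PureChild {J K : ℕ} (G : Fin J → Fin K → Bool) : Prop :=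
  (∀ j, (co G j).Nonempty) ∧
    ∀ k : Fin K,
      2 ≤ (Finset.univ.filter (fun j => co G j = ({k} : Finset (Fin K)))).card

/-- Pairwise rank condition (paper's Lemma 3 conclusion, holding generically). -/
def PairwiseRank {J K V H : ℕ} [NeZero H] (G : Fin J → Fin K → Bool)
    (θ : Fin J → (Fin K → Fin H) → Fin V → ℝ) : Prop :=
  ∀ j₁ j₂ : Fin J, j₁ ≠ j₂ → (¬ ∃ k : Fin K, co G j₁ ∪ co G j₂ = {k}) →
    H < (cpt θ ({j₁, j₂} : Finset (Fin J)) (co G j₁ ∪ co G j₂)).rank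

/-- Khatri–Rao (column-wise Kronecker) product. -/
noncomputable def khatriRao {I J R : ℕ} (A : Matrix (Fin I) (Fin R) ℝ)
    (B : Matrix (Fin J) (Fin R) ℝ) : Matrix (Fin I × Fin J) (Fin R) ℝ :=
  Matrix.of fun p r => A p.1 r * B p.2 r

/-- Kruskal rank: the largest `r` such that every `r` columns are linearly
independent. -/
noncomputable def krank {I R : ℕ} (A : Matrix (Fin I) (Fin R) ℝ) : ℕ :=
  @Nat.findGreatest
    (fun r => ∀ s : Finset (Fin R), s.card = r →
      LinearIndependent ℝ (fun j : {x // x ∈ s} => (fun i => A i j.1)))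
    (Classical.decPred _) R

/-- The joint probability table `P(A_S, A)`. -/
noncomputable def jointLatent {K H : ℕ} (ν : (Fin K → Fin H) → ℝ) (S : Finset (Fin K)) :
    Matrix ({k // k ∈ S} → Fin H) (Fin K → Fin H) ℝ :=
  Matrix.of fun a b => if ∀ k : {k // k ∈ S}, b k.1 = a k then ν b else 0

/-- A family of `m` pairwise disjoint subsets of observed variables witnessing the
rank certificate of Proposition 1. -/
def GoodFamily {J K V H : ℕ} [NeZero H] (ν : (Fin K → Fin H) → ℝ)
    (θ : Fin J → (Fin K → Fin H) → Fin V → ℝ) (m : ℕ) : Prop :=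
  ∃ S : Fin m → Finset (Fin J),
    (∀ l l', l ≠ l' → Disjoint (S l) (S l')) ∧
    (∀ l, 2 ≤ (S l).card) ∧
    (∀ l, ∀ j₁ ∈ S l, ∀ j₂ ∈ S l, j₁ ≠ j₂ →
      (unfoldRow ν θ ({j₁, j₂} : Finset (Fin J))).rank ≤ H) ∧
    (∀ l l', l ≠ l' → ∀ j₁ ∈ S l, ∀ j₂ ∈ S l',
      H < (unfoldRow ν θ ({j₁, j₂} : Finset (Fin J))).rank)

/-- Index type for the free parameters of the pair `(θ_{j₁}, θ_{j₂})`: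
for each `j ∈ {j₁,j₂}`, each latent configuration on `co G j`, and each
`v ∈ {0,…,V-2}` one real parameter (the `v = V-1` entry is determined by
normalization). -/
abbrev ParamIx (V H : ℕ) {J K : ℕ} (G : Fin J → Fin K → Bool) (j₁ j₂ : Fin J) : Type :=
  Σ j : {j // j ∈ ({j₁, j₂} : Finset (Fin J))},
    (({k // k ∈ co G j.1} → Fin H) × Fin (V - 1))

/-- The conditional probability tables determined by a parameter point
`x : ℝ^D`. -/
noncomputable def thetaOf {J K : ℕ} (V H : ℕ) [NeZero H] [NeZero V]
    (G : Fin J → Fin K → Bool) (j₁ j₂ : Fin J)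
    (x : ParamIx V H G j₁ j₂ → ℝ) :
    Fin J → (Fin K → Fin H) → Fin V → ℝ :=
  fun j a v =>
    if hj : j ∈ ({j₁, j₂} : Finset (Fin J)) then
      if hv : v.1 < V - 1 then
        x ⟨⟨j, hj⟩, (fun k => a k.1, ⟨v.1, hv⟩)⟩
      else 1 - ∑ v' : Fin (V - 1), x ⟨⟨j, hj⟩, (fun k => a k.1, v')⟩
    else if v = 0 then 1 else 0

section Helpers

-- dual functionals for a linearly independent family
lemma exists_dual {n : ℕ} {ι : Type*} [Fintype ι] [DecidableEq ι] (v : ι → Fin n → ℝ)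
    (li : LinearIndependent ℝ v) (i₀ : ι) :
    ∃ φ : Fin n → ℝ, ∀ i, ∑ y, φ y * v i y = if i = i₀ then 1 else 0 := by
  classical
  set b : Module.Basis ι ℝ (Submodule.span ℝ (Set.range v)) := Module.Basis.span li
  obtain ⟨g, hg⟩ := LinearMap.exists_extend (b.coord i₀)
  refine ⟨fun y => g (Pi.single y 1), fun i => ?_⟩
  have h1 : ∀ u : Fin n → ℝ, ∑ y, g (Pi.single y 1) * u y = g u := by
    intro u
    have : u = ∑ y, u y • (Pi.single y (1:ℝ) : Fin n → ℝ) := by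
      ext z; simp [Pi.single_apply]
    conv_rhs => rw [this]
    rw [map_sum]
    refine Finset.sum_congr rfl fun y _ => ?_
    rw [g.map_smul]; simp [mul_comm]
  rw [h1]
  have hmem : v i ∈ Submodule.span ℝ (Set.range v) := Submodule.subset_span ⟨i, rfl⟩
  have : g (v i) = b.coord i₀ ⟨v i, hmem⟩ := by
    have := congrArg (fun f => f ⟨v i, hmem⟩) hg
    simpa using this
  rw [this]
  have hb : (⟨v i, hmem⟩ : Submodule.span ℝ (Set.range v)) = b i := by
    apply Subtype.ext
    simp [b, Module.Basis.span_apply]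
  rw [hb]
  simp [Module.Basis.coord_apply, Module.Basis.repr_self, Finsupp.single_apply, eq_comm]

-- product family linear independence
lemma prodLI {σ : Type*} [Fintype σ] [DecidableEq σ] {Hn Vn : ℕ}
    (f : σ → Fin Hn → Fin Vn → ℝ) (hf : ∀ i, LinearIndependent ℝ (f i)) :
    LinearIndependent ℝ
      (fun a : σ → Fin Hn => fun y : σ → Fin Vn => ∏ i, f i (a i) (y i)) := by
  classical
  rw [Fintype.linearIndependent_iff]
  intro g hg a₀
  choose φ hφ using fun i => exists_dual (f i) (hf i) (a₀ i)
  have hpt : ∀ y : σ → Fin Vn, ∑ a : σ → Fin Hn, g a * ∏ i, f i (a i) (y i) = 0 := by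
    intro y
    have := congrFun hg y
    simpa [Finset.sum_apply] using this
  have keq : ∀ a : σ → Fin Hn,
      ∑ y : σ → Fin Vn, (∏ i, φ i (y i)) * (g a * ∏ i, f i (a i) (y i))
        = g a * (if a = a₀ then 1 else 0) := by
    intro a
    have h3 : ∀ y : σ → Fin Vn, (∏ i, φ i (y i)) * (g a * ∏ i, f i (a i) (y i))
        = g a * ∏ i, (φ i (y i) * f i (a i) (y i)) := by
      intro y; rw [Finset.prod_mul_distrib]; ring
    rw [Finset.sum_congr rfl (fun y _ => h3 y), ← Finset.mul_sum,
      ← Fintype.prod_sum (fun i v => φ i v * f i (a i) v)]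
    congr 1
    rw [Finset.prod_congr rfl (fun i _ => hφ i (a i))]
    by_cases h : a = a₀
    · simp [h]
    · obtain ⟨i, hi⟩ := Function.ne_iff.mp h
      rw [if_neg h]
      exact Finset.prod_eq_zero (Finset.mem_univ i) (if_neg hi)
  have key : ∑ a : σ → Fin Hn, g a * (if a = a₀ then (1:ℝ) else 0) = 0 := by
    have h0 : ∑ y : σ → Fin Vn, (∏ i, φ i (y i)) *
        (∑ a : σ → Fin Hn, g a * ∏ i, f i (a i) (y i)) = 0 := by
      simp [hpt]
    calc ∑ a : σ → Fin Hn, g a * (if a = a₀ then (1:ℝ) else 0)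
        = ∑ a : σ → Fin Hn, ∑ y : σ → Fin Vn,
            (∏ i, φ i (y i)) * (g a * ∏ i, f i (a i) (y i)) := by
          exact (Finset.sum_congr rfl fun a _ => (keq a).symm)
      _ = ∑ y : σ → Fin Vn, ∑ a : σ → Fin Hn,
            (∏ i, φ i (y i)) * (g a * ∏ i, f i (a i) (y i)) := Finset.sum_comm
      _ = 0 := by
          rw [← h0]
          exact Finset.sum_congr rfl fun y _ => by rw [Finset.mul_sum]
  simpa using key

-- columns linearly independent from full rank
lemma li_cols_of_rank_eq_card {m n : Type*} [Fintype m] [Fintype n] [DecidableEq n]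
    (A : Matrix m n ℝ) (h : A.rank = Fintype.card n) :
    LinearIndependent ℝ (fun j : n => Aᵀ j) := by
  change LinearIndependent ℝ A.col
  rw [← Matrix.mulVec_injective_iff]
  have hr : Module.finrank ℝ (LinearMap.range A.mulVecLin) = Fintype.card n := h
  have hk := A.mulVecLin.finrank_range_add_finrank_ker
  rw [hr] at hk
  simp only [Module.finrank_fintype_fun_eq_card] at hk
  have hker : Module.finrank ℝ (LinearMap.ker A.mulVecLin) = 0 := by omega
  have : LinearMap.ker A.mulVecLin = ⊥ := Submodule.finrank_eq_zero.mp hker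
  have hinj := LinearMap.ker_eq_bot.mp this
  exact hinj

-- rank at least card of a linearly independent set of columns
lemma card_le_rank_of_li {m n : Type*} [Fintype m] [Fintype n] {ι : Type*} [Fintype ι]
    (A : Matrix m n ℝ) (c : ι → n)
    (hli : LinearIndependent ℝ (fun s : ι => Aᵀ (c s))) :
    Fintype.card ι ≤ A.rank := by
  rw [Matrix.rank_eq_finrank_span_cols]
  have h1 : Module.finrank ℝ
      (Submodule.span ℝ (Set.range (fun s : ι => Aᵀ (c s)))) = Fintype.card ι :=
    finrank_span_eq_card hli
  rw [← h1]
  apply Submodule.finrank_mono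
  apply Submodule.span_mono
  rintro _ ⟨s, rfl⟩
  exact ⟨c s, rfl⟩

-- rank of a product with a surjective right factor
lemma rank_mul_of_surj {m n o : Type*} [Fintype m] [Fintype n] [Fintype o]
    (A : Matrix m n ℝ) (B : Matrix n o ℝ)
    (hB : B.rank = Fintype.card n) : (A * B).rank = A.rank := by
  have hsurj : LinearMap.range B.mulVecLin = ⊤ := by
    apply Submodule.eq_top_of_finrank_eq
    rw [Module.finrank_fintype_fun_eq_card]
    exact hB
  unfold Matrix.rank
  rw [Matrix.mulVecLin_mul, LinearMap.range_comp_of_range_eq_top _ hsurj]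

-- marginalization
lemma sum_ite_prod {Jn Vn : ℕ} (S : Finset (Fin Jn)) (g : Fin Jn → Fin Vn → ℝ)
    (hg : ∀ j, j ∉ S → ∑ v, g j v = 1) (r : {j // j ∈ S} → Fin Vn) :
    ∑ y : Fin Jn → Fin Vn,
      (if ∀ j : {j // j ∈ S}, y j.1 = r j then ∏ j, g j (y j) else 0)
      = ∏ j : {j // j ∈ S}, g j.1 (r j) := by
  classical
  set e := (Equiv.piEquivPiSubtypeProd (fun j : Fin Jn => j ∈ S) (fun _ => Fin Vn)).symm
  rw [← Equiv.sum_comp e]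
  rw [Fintype.sum_prod_type]
  have hval : ∀ (u : {j // j ∈ S} → Fin Vn) (w : {j // ¬ j ∈ S} → Fin Vn)
      (j : Fin Jn) (h : j ∈ S), e (u, w) j = u ⟨j, h⟩ := by
    intro u w j h
    simp [e, Equiv.piEquivPiSubtypeProd, h]
  have hval' : ∀ (u : {j // j ∈ S} → Fin Vn) (w : {j // ¬ j ∈ S} → Fin Vn)
      (j : Fin Jn) (h : ¬ j ∈ S), e (u, w) j = w ⟨j, h⟩ := by
    intro u w j h
    simp [e, Equiv.piEquivPiSubtypeProd, h]
  have hcond : ∀ u w, (∀ j : {j // j ∈ S}, e (u, w) j.1 = r j) ↔ u = r := by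
    intro u w
    constructor
    · intro h; funext j; rw [← h j]; exact (hval u w j.1 j.2).symm
    · intro h j; rw [hval u w j.1 j.2, h]
  have hprod : ∀ u w, (∏ j, g j (e (u, w) j)) =
      (∏ j : {j // j ∈ S}, g j.1 (u j)) * (∏ j : {j // ¬ j ∈ S}, g j.1 (w j)) := by
    intro u w
    rw [← Fintype.prod_subtype_mul_prod_subtype (fun j => j ∈ S) (fun j => g j (e (u,w) j))]
    congr 1
    · refine Finset.prod_congr ?_ fun j _ => by rw [hval u w j.1 j.2]
      congr!
    · refine Finset.prod_congr ?_ fun j _ => by rw [hval' u w j.1 j.2]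
      congr!
  have hstep : ∀ u : {j // j ∈ S} → Fin Vn,
      (∑ w : {j // ¬ j ∈ S} → Fin Vn,
        (if ∀ j : {j // j ∈ S}, e (u, w) j.1 = r j then ∏ j, g j (e (u, w) j) else 0))
      = if u = r then (∏ j : {j // j ∈ S}, g j.1 (u j)) else 0 := by
    intro u
    by_cases h : u = r
    · rw [if_pos h]
      have step1 : ∀ w : {j // ¬ j ∈ S} → Fin Vn,
          (if ∀ j : {j // j ∈ S}, e (u, w) j.1 = r j then ∏ j, g j (e (u, w) j) else 0)
          = (∏ j : {j // j ∈ S}, g j.1 (u j)) * (∏ j : {j // ¬ j ∈ S}, g j.1 (w j)) := by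
        intro w
        rw [if_pos ((hcond u w).mpr h), hprod u w]
      rw [Finset.sum_congr rfl fun w _ => step1 w]
      rw [← Finset.mul_sum, ← Fintype.prod_sum (fun (j : {j // ¬ j ∈ S}) v => g j.1 v)]
      rw [Finset.prod_congr rfl fun (j : {j // ¬ j ∈ S}) _ => hg j.1 j.2]
      simp
    · simp only [if_neg h]
      refine Finset.sum_eq_zero fun w _ => ?_
      rw [if_neg (fun hc => h ((hcond u w).mp hc))]
  rw [Finset.sum_congr rfl fun u _ => hstep u]
  rw [Finset.sum_ite_eq' Finset.univ r (fun u => ∏ j : {j // j ∈ S}, g j.1 (u j))]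
  simp
end Helpers


lemma unfoldT_apply_eq {J K V H : ℕ} (ν : (Fin K → Fin H) → ℝ)
    (θ : Fin J → (Fin K → Fin H) → Fin V → ℝ) (hcpt : IsCPT θ)
    (S₁ S₂ : Finset (Fin J)) (hdisj : Disjoint S₁ S₂)
    (r : {j // j ∈ S₁} → Fin V) (c : {j // j ∈ S₂} → Fin V) :
    unfoldT ν θ S₁ S₂ r c =
      ∑ a : Fin K → Fin H, ν a * ((∏ i : {j // j ∈ S₁}, θ i.1 a (r i)) *
        (∏ i : {j // j ∈ S₂}, θ i.1 a (c i))) := by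
  classical
  have hrc : ∀ j : Fin J, j ∈ S₁ ∪ S₂ → (j ∈ S₁ ∨ j ∈ S₂) := by
    intro j hj; exact Finset.mem_union.mp hj
  set rc : {j // j ∈ S₁ ∪ S₂} → Fin V := fun j =>
    if h : j.1 ∈ S₁ then r ⟨j.1, h⟩ else c ⟨j.1, (hrc j.1 j.2).resolve_left h⟩ with hrcdef
  have hcondiff : ∀ y : Fin J → Fin V,
      ((∀ j : {j // j ∈ S₁}, y j.1 = r j) ∧ (∀ j : {j // j ∈ S₂}, y j.1 = c j)) ↔
      (∀ j : {j // j ∈ S₁ ∪ S₂}, y j.1 = rc j) := by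
    intro y
    constructor
    · rintro ⟨h1, h2⟩ j
      by_cases h : j.1 ∈ S₁
      · rw [hrcdef]; simp only [dif_pos h]; exact h1 ⟨j.1, h⟩
      · rw [hrcdef]; simp only [dif_neg h]; exact h2 ⟨j.1, _⟩
    · intro hy
      constructor
      · intro j
        have := hy ⟨j.1, Finset.mem_union_left _ j.2⟩
        rw [hrcdef] at this; simp only [dif_pos j.2] at this; exact this
      · intro j
        have hns : ¬ j.1 ∈ S₁ := fun hmem => (Finset.disjoint_left.mp hdisj) hmem j.2
        have := hy ⟨j.1, Finset.mem_union_right _ j.2⟩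
        rw [hrcdef] at this; simp only [dif_neg hns] at this
        convert this using 2
      
  have e1 : ∀ y : Fin J → Fin V,
      (if (∀ j : {j // j ∈ S₁}, y j.1 = r j) ∧ (∀ j : {j // j ∈ S₂}, y j.1 = c j)
        then jointP ν θ y else 0)
      = ∑ a : Fin K → Fin H,
          ν a * (if ∀ j : {j // j ∈ S₁ ∪ S₂}, y j.1 = rc j
            then ∏ jj, θ jj a (y jj) else 0) := by
    intro y
    by_cases hcy : ∀ j : {j // j ∈ S₁ ∪ S₂}, y j.1 = rc j
    · rw [if_pos ((hcondiff y).mpr hcy)]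
      simp only [if_pos hcy]
      rfl
    · rw [if_neg (fun hc => hcy ((hcondiff y).mp hc))]
      simp only [if_neg hcy, mul_zero, Finset.sum_const_zero]
  have step1 : unfoldT ν θ S₁ S₂ r c = ∑ a : Fin K → Fin H, ν a *
      (∑ y : Fin J → Fin V,
        (if ∀ j : {j // j ∈ S₁ ∪ S₂}, y j.1 = rc j then ∏ jj, θ jj a (y jj) else 0)) := by
    have hdef : unfoldT ν θ S₁ S₂ r c = ∑ y : Fin J → Fin V,
        if (∀ j : {j // j ∈ S₁}, y j.1 = r j) ∧ (∀ j : {j // j ∈ S₂}, y j.1 = c j)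
          then jointP ν θ y else 0 := rfl
    rw [hdef, Finset.sum_congr rfl fun y _ => e1 y, Finset.sum_comm]
    exact Finset.sum_congr rfl fun a _ => (Finset.mul_sum _ _ _).symm
  rw [step1]
  refine Finset.sum_congr rfl fun a _ => ?_
  congr 1
  rw [sum_ite_prod (S₁ ∪ S₂) (fun jj => θ jj a) (fun jj _ => (hcpt jj a).2) rc]
  -- now split the product over the union
  set F : Fin J → ℝ := fun jj =>
    if h : jj ∈ S₁ then θ jj a (r ⟨jj, h⟩)
    else if h2 : jj ∈ S₂ then θ jj a (c ⟨jj, h2⟩) else 1 with hF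
  have hFu : ∀ j : {j // j ∈ S₁ ∪ S₂}, θ j.1 a (rc j) = F j.1 := by
    intro j
    by_cases h : j.1 ∈ S₁
    · rw [hF]; simp only [dif_pos h, hrcdef]
    · have h2 : j.1 ∈ S₂ := (hrc j.1 j.2).resolve_left h
      rw [hF]; simp only [dif_neg h, dif_pos h2, hrcdef]
  rw [Finset.prod_congr rfl fun j _ => hFu j]
  have hsplit : (∏ j : {j // j ∈ S₁ ∪ S₂}, F j.1)
      = (∏ j : {j // j ∈ S₁}, F j.1) * (∏ j : {j // j ∈ S₂}, F j.1) := by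
    rw [Finset.prod_coe_sort (S₁ ∪ S₂) F, Finset.prod_coe_sort S₁ F,
      Finset.prod_coe_sort S₂ F, Finset.prod_union hdisj]
  rw [hsplit]
  congr 1
  · exact Finset.prod_congr rfl fun j _ => by rw [hF]; simp only [dif_pos j.2]
  · refine Finset.prod_congr rfl fun j _ => ?_
    have hns : ¬ j.1 ∈ S₁ := fun hmem => (Finset.disjoint_left.mp hdisj) hmem j.2
    rw [hF]; simp only [dif_neg hns, dif_pos j.2]




lemma singleLI {J K V H : ℕ} [NeZero H] {G : Fin J → Fin K → Bool}
    {θ : Fin J → (Fin K → Fin H) → Fin V → ℝ}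
    (hdep : DependsOnlyOnCo G θ) (hA1 : Assumption1 G θ)
    (i : Fin J) (κ : Fin K) (hco : co G i = {κ}) :
    LinearIndependent ℝ (fun h : Fin H => fun v : Fin V => θ i (fun _ => h) v) := by
  classical
  have hcard : (co G i).card = 1 := by rw [hco]; simp
  have hrank := hA1 i hcard
  rw [hco] at hrank
  have hcardcol : Fintype.card ({k // k ∈ ({κ} : Finset (Fin K))} → Fin H) = H := by
    rw [Fintype.card_fun]
    simp
  have hli := li_cols_of_rank_eq_card (cpt θ {i} ({κ} : Finset (Fin K)))
    (by rw [hrank, hcardcol])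
  -- compose with the injection Fin H → columns index
  have hmemκ : κ ∈ ({κ} : Finset (Fin K)) := Finset.mem_singleton_self κ
  set eH : Fin H → ({k // k ∈ ({κ} : Finset (Fin K))} → Fin H) := fun h _ => h with heH
  have heHinj : Function.Injective eH := by
    intro h h' hhh
    exact congrFun hhh ⟨κ, hmemκ⟩
  have hli2 := hli.comp eH heHinj
  -- transport along the row equivalence
  have hmemi : i ∈ ({i} : Finset (Fin J)) := Finset.mem_singleton_self i
  have huniq : ∀ z : {j // j ∈ ({i} : Finset (Fin J))}, z = ⟨i, hmemi⟩ := by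
    intro z; apply Subtype.ext; exact Finset.mem_singleton.mp z.2
  set eV : Fin V ≃ ({j // j ∈ ({i} : Finset (Fin J))} → Fin V) :=
    { toFun := fun v _ => v
      invFun := fun y => y ⟨i, hmemi⟩
      left_inv := fun v => rfl
      right_inv := fun y => by funext z; rw [huniq z] } with heV
  have hli3 := hli2.map' (LinearEquiv.funCongrLeft ℝ ℝ eV).toLinearMap
    (LinearEquiv.ker _)
  have hfun : ((LinearEquiv.funCongrLeft ℝ ℝ eV).toLinearMap ∘
      ((fun b => (cpt θ {i} ({κ} : Finset (Fin K)))ᵀ b) ∘ eH))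
      = (fun h : Fin H => fun v : Fin V => θ i (fun _ => h) v) := by
    funext h v
    show (cpt θ {i} ({κ} : Finset (Fin K)))ᵀ (eH h) (eV v) = θ i (fun _ => h) v
    show (∏ jj : {j // j ∈ ({i} : Finset (Fin J))},
      θ jj.1 (extendA {κ} (eH h)) v) = θ i (fun _ => h) v
    have hone : (∏ jj : {j // j ∈ ({i} : Finset (Fin J))},
        θ jj.1 (extendA {κ} (eH h)) v) = θ i (extendA {κ} (eH h)) v := by
      rw [Finset.prod_congr rfl (fun z (_ : z ∈ Finset.univ) =>
        (by rw [huniq z] : θ z.1 (extendA {κ} (eH h)) v = θ i (extendA {κ} (eH h)) v))]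
      rw [Finset.prod_const, Finset.card_univ, Fintype.card_coe,
        Finset.card_singleton, pow_one]
    rw [hone]
    apply congrFun
    apply hdep
    intro m hm
    rw [hco] at hm
    have : m = κ := Finset.mem_singleton.mp hm
    subst this
    simp [extendA, heH]
  rw [hfun] at hli3
  exact hli3

/-- Proposition 2: the unfolding `[T]_{([K]∖{k}) ∪ {j}, {K+1,…,2K}}`
has rank exceeding `H^{K-1}` iff `k ∈ co(j)`, for multi-parent `j`. -/
theorem prop2
    {J K V H : ℕ} [NeZero H] (hH : 2 ≤ H) (hVH : H ≤ V) (hJ : 2 * K ≤ J)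
    (G : Fin J → Fin K → Bool)
    (ν : (Fin K → Fin H) → ℝ) (θ : Fin J → (Fin K → Fin H) → Fin V → ℝ)
    (hdep : DependsOnlyOnCo G θ) (hcpt : IsCPT θ) (hpmf : IsPMF ν)
    (hpos : ∀ a, 0 < ν a)
    (hA1 : Assumption1 G θ) (hA2 : Assumption2 G θ)
    (hfirst : ∀ k : Fin K, co G ⟨k.1, by have := k.isLt; omega⟩ = {k})
    (hsecond : ∀ k : Fin K, co G ⟨K + k.1, by have := k.isLt; omega⟩ = {k}) :
    ∀ (k : Fin K) (j : Fin J), 2 * K ≤ j.1 → 2 ≤ (co G j).card →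
      (H ^ (K - 1) <
          (unfoldT ν θ
            ((Finset.univ.filter (fun i : Fin J => i.1 < K ∧ i.1 ≠ k.1)) ∪ {j})
            (Finset.univ.filter (fun i : Fin J => K ≤ i.1 ∧ i.1 < 2 * K))).rank
        ↔ k ∈ co G j) := by
  classical
  intro k j hj2K hcard2
  set Q : Finset (Fin J) := Finset.univ.filter (fun i : Fin J => i.1 < K ∧ i.1 ≠ k.1) with hQ
  set S₁ : Finset (Fin J) := Q ∪ {j} with hS₁
  set S₂ : Finset (Fin J) := Finset.univ.filter (fun i : Fin J => K ≤ i.1 ∧ i.1 < 2 * K) with hS₂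
  have hmemQ : ∀ i : Fin J, i ∈ Q ↔ (i.1 < K ∧ i.1 ≠ k.1) := by
    intro i; rw [hQ]; simp
  have hmemS₁ : ∀ i : Fin J, i ∈ S₁ ↔ ((i.1 < K ∧ i.1 ≠ k.1) ∨ i = j) := by
    intro i; rw [hS₁, Finset.mem_union, hmemQ, Finset.mem_singleton]
  have hmemS₂ : ∀ i : Fin J, i ∈ S₂ ↔ (K ≤ i.1 ∧ i.1 < 2 * K) := by
    intro i; rw [hS₂]; simp
  have hdisj : Disjoint S₁ S₂ := by
    rw [Finset.disjoint_left]
    intro i hi1 hi2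
    rw [hmemS₁] at hi1
    rw [hmemS₂] at hi2
    rcases hi1 with h | rfl
    · omega
    · omega
  set N : Matrix ({i // i ∈ S₁} → Fin V) (Fin K → Fin H) ℝ :=
    Matrix.of (fun r a => ν a * ∏ i : {i // i ∈ S₁}, θ i.1 a (r i)) with hN
  set M2 : Matrix (Fin K → Fin H) ({i // i ∈ S₂} → Fin V) ℝ :=
    Matrix.of (fun a c => ∏ i : {i // i ∈ S₂}, θ i.1 a (c i)) with hM2
  have hfact : unfoldT ν θ S₁ S₂ = N * M2 := by
    ext r c
    rw [Matrix.mul_apply, unfoldT_apply_eq ν θ hcpt S₁ S₂ hdisj r c]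
    exact Finset.sum_congr rfl fun a _ => by rw [hN, hM2]; simp [mul_assoc]
  have hM2li : LinearIndependent ℝ (fun a : Fin K → Fin H =>
      fun c : {i // i ∈ S₂} → Fin V => ∏ i : {i // i ∈ S₂}, θ i.1 a (c i)) := by
    have hκlt : ∀ i : {i // i ∈ S₂}, i.1.1 - K < K := by
      intro i
      have := (hmemS₂ i.1).mp i.2
      omega
    set κ : {i // i ∈ S₂} → Fin K := fun i => ⟨i.1.1 - K, hκlt i⟩ with hκ
    have hco2 : ∀ i : {i // i ∈ S₂}, co G i.1 = {κ i} := by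
      intro i
      have hmm := (hmemS₂ i.1).mp i.2
      have := hsecond (κ i)
      have heq : (⟨K + (κ i).1, by have := (κ i).isLt; omega⟩ : Fin J) = i.1 := by
        apply Fin.ext
        simp [hκ]
        omega
      rwa [heq] at this
    set f : {i // i ∈ S₂} → Fin H → Fin V → ℝ := fun i h => θ i.1 (fun _ => h) with hf
    have hfLI : ∀ i, LinearIndependent ℝ (f i) := fun i =>
      singleLI hdep hA1 i.1 (κ i) (hco2 i)
    have fam := prodLI f hfLI
    set π : (Fin K → Fin H) → ({i // i ∈ S₂} → Fin H) := fun a i => a (κ i) with hπ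
    have hπinj : Function.Injective π := by
      intro a a' haa
      funext m
      have hm2 : K + m.1 < 2 * K := by have := m.isLt; omega
      have hmem : (⟨K + m.1, by omega⟩ : Fin J) ∈ S₂ := by
        rw [hmemS₂]; constructor <;> simp <;> omega
      have := congrFun haa ⟨⟨K + m.1, by omega⟩, hmem⟩
      simp only [hπ, hκ, Nat.add_sub_cancel_left, Fin.eta] at this
      exact this
    have fam2 := fam.comp π hπinj
    have hfun : ((fun b : {i // i ∈ S₂} → Fin H =>
        fun c : {i // i ∈ S₂} → Fin V => ∏ i, f i (b i) (c i)) ∘ π)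
        = (fun a : Fin K → Fin H =>
          fun c : {i // i ∈ S₂} → Fin V => ∏ i : {i // i ∈ S₂}, θ i.1 a (c i)) := by
      funext a c
      refine Finset.prod_congr rfl fun i _ => ?_
      show f i (a (κ i)) (c i) = θ i.1 a (c i)
      rw [hf]
      have := hdep i.1 a (fun _ => a (κ i)) (by
        intro m hm
        rw [hco2 i] at hm
        rw [Finset.mem_singleton.mp hm])
      rw [this]
    rwa [hfun] at fam2
  have hM2rank : M2.rank = Fintype.card (Fin K → Fin H) := by
    exact LinearIndependent.rank_matrix hM2li
  have hcardB : Fintype.card ({m : Fin K // m ≠ k} → Fin H) = H ^ (K - 1) := by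
    rw [Fintype.card_fun, Fintype.card_fin]
    congr 1
    rw [Fintype.card_subtype_compl (p := fun m : Fin K => m = k)]
    rw [Fintype.card_subtype_eq, Fintype.card_fin]
  have hupper : ¬ k ∈ co G j → (unfoldT ν θ S₁ S₂).rank ≤ H ^ (K - 1) := by
    intro hknot
    set extk : ({m : Fin K // m ≠ k} → Fin H) → (Fin K → Fin H) :=
      fun b m => if hm : m = k then 0 else b ⟨m, hm⟩ with hextk
    set P : Matrix ({i // i ∈ S₁} → Fin V) ({m : Fin K // m ≠ k} → Fin H) ℝ :=
      Matrix.of (fun r b => ∏ i : {i // i ∈ S₁}, θ i.1 (extk b) (r i)) with hP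
    set E : Matrix ({m : Fin K // m ≠ k} → Fin H) (Fin K → Fin H) ℝ :=
      Matrix.of (fun b a =>
        if b = (fun m : {m : Fin K // m ≠ k} => a m.1) then ν a else 0) with hE
    have hagree : ∀ (i : {i // i ∈ S₁}) (a : Fin K → Fin H),
        θ i.1 a = θ i.1 (extk (fun m : {m : Fin K // m ≠ k} => a m.1)) := by
      intro i a
      apply hdep
      intro m hm
      have hmk : m ≠ k := by
        rcases (hmemS₁ i.1).mp i.2 with hQ' | heqj
        · have hfi : co G i.1 = {⟨i.1.1, hQ'.1⟩} := by
            convert hfirst ⟨i.1.1, hQ'.1⟩ using 2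
          rw [hfi, Finset.mem_singleton] at hm
          subst hm
          intro hc
          exact hQ'.2 (congrArg Fin.val hc)
        · intro hc
          subst hc
          rw [heqj] at hm
          exact hknot hm
      rw [hextk]
      simp [dif_neg hmk]
    have hNPE : N = P * E := by
      ext r a
      rw [Matrix.mul_apply]
      have hsum : ∀ b, P r b * E b a =
          if b = (fun m : {m : Fin K // m ≠ k} => a m.1)
            then P r b * ν a else 0 := by
        intro b
        rw [hE]
        by_cases hb : b = (fun m : {m : Fin K // m ≠ k} => a m.1)
        · simp [hb]
        · simp [hb]
      rw [Finset.sum_congr rfl fun b _ => hsum b]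
      rw [Finset.sum_ite_eq' Finset.univ (fun m : {m : Fin K // m ≠ k} => a m.1)
        (fun b => P r b * ν a)]
      simp only [Finset.mem_univ, if_true]
      rw [hN, hP]
      show ν a * ∏ i : {i // i ∈ S₁}, θ i.1 a (r i) = _
      rw [mul_comm]
      congr 1
      exact Finset.prod_congr rfl fun i _ => by rw [hagree i a]
    calc (unfoldT ν θ S₁ S₂).rank = (N * M2).rank := by rw [hfact]
      _ ≤ N.rank := Matrix.rank_mul_le_left N M2
      _ = (P * E).rank := by rw [hNPE]
      _ ≤ P.rank := Matrix.rank_mul_le_left P E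
      _ ≤ Fintype.card ({m : Fin K // m ≠ k} → Fin H) := Matrix.rank_le_card_width P
      _ = H ^ (K - 1) := hcardB
  have hlower : k ∈ co G j → H ^ (K - 1) < (unfoldT ν θ S₁ S₂).rank := by
    intro hk
    have hrankeq : (unfoldT ν θ S₁ S₂).rank = N.rank := by
      rw [hfact]
      exact rank_mul_of_surj N M2 hM2rank
    rw [hrankeq]
    obtain ⟨a0, h, h', hneq⟩ := hA2 j k hk
    have hh' : h ≠ h' := fun hcc => hneq (by rw [hcc])
    set ext2 : ({m : Fin K // m ≠ k} → Fin H) → Fin H → (Fin K → Fin H) :=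
      fun b hh m => if hm : m = k then hh else b ⟨m, hm⟩ with hext2
    have hext2k : ∀ b hh, ext2 b hh k = hh := by
      intro b hh; rw [hext2]; simp
    have hext2m : ∀ b hh (m : {m : Fin K // m ≠ k}), ext2 b hh m.1 = b m := by
      intro b hh m; rw [hext2]; simp [dif_neg m.2]
    set bstar : {m : Fin K // m ≠ k} → Fin H := fun m => a0 m.1 with hbstar
    have hextstar : ∀ hh : Fin H, ext2 bstar hh = Function.update a0 k hh := by
      intro hh; funext m
      rw [hext2, Function.update_apply]
      by_cases hm : m = k
      · simp [hm]
      · simp [hm, hbstar]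
    set csel : (({m : Fin K // m ≠ k} → Fin H) ⊕ Unit) → (Fin K → Fin H) :=
      Sum.elim (fun b => ext2 b h) (fun _ => ext2 bstar h') with hcsel
    -- dual functionals for the first K-1 coordinates
    have hmQlt : ∀ m : {m : Fin K // m ≠ k}, m.1.1 < J := by
      intro m; have := m.1.isLt; omega
    have hQli : ∀ m : {m : Fin K // m ≠ k}, LinearIndependent ℝ
        (fun hh : Fin H => fun v : Fin V => θ ⟨m.1.1, hmQlt m⟩ (fun _ => hh) v) := by
      intro m
      apply singleLI hdep hA1 ⟨m.1.1, hmQlt m⟩ m.1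
      convert hfirst m.1 using 2
    choose φ hφ using fun (m : {m : Fin K // m ≠ k}) (t : Fin H) =>
      exists_dual _ (hQli m) t
    -- membership facts
    have hjS₁ : j ∈ S₁ := (hmemS₁ j).mpr (Or.inr rfl)
    have hiK : ∀ i : {i // i ∈ S₁}, i.1 ≠ j → i.1.1 < K ∧ i.1.1 ≠ k.1 := by
      intro i hij
      rcases (hmemS₁ i.1).mp i.2 with hQ' | heqj
      · exact hQ'
      · exact absurd heqj hij
    -- the key functional computation
    set Ψ : ({m : Fin K // m ≠ k} → Fin H) → Fin V → {i // i ∈ S₁} → Fin V → ℝ :=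
      fun b₀ v₀ i v =>
        if hij : i.1 = j then (if v = v₀ then (1:ℝ) else 0)
        else φ ⟨⟨i.1.1, (hiK i hij).1⟩,
            fun hc => (hiK i hij).2 (congrArg Fin.val hc)⟩
          (b₀ ⟨⟨i.1.1, (hiK i hij).1⟩,
            fun hc => (hiK i hij).2 (congrArg Fin.val hc)⟩) v with hΨ
    have hkey : ∀ (b₀ : {m : Fin K // m ≠ k} → Fin H) (v₀ : Fin V)
        (a : Fin K → Fin H),
        (∑ r : {i // i ∈ S₁} → Fin V,
          (∏ i : {i // i ∈ S₁}, Ψ b₀ v₀ i (r i)) * N r a)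
        = ν a * θ j a v₀ *
            (if ∀ m : {m : Fin K // m ≠ k}, a m.1 = b₀ m then 1 else 0) := by
      intro b₀ v₀ a
      have hstep1 : ∀ r : {i // i ∈ S₁} → Fin V,
          (∏ i : {i // i ∈ S₁}, Ψ b₀ v₀ i (r i)) * N r a
          = ν a * ∏ i : {i // i ∈ S₁}, (Ψ b₀ v₀ i (r i) * θ i.1 a (r i)) := by
        intro r
        show _ = ν a * ∏ i : {i // i ∈ S₁}, (Ψ b₀ v₀ i (r i) * θ i.1 a (r i))
        rw [Finset.prod_mul_distrib]
        show _ * (Matrix.of (fun r a => ν a * ∏ i : {i // i ∈ S₁}, θ i.1 a (r i)) r a) = _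
        rw [Matrix.of_apply]
        ring
      rw [Finset.sum_congr rfl fun r _ => hstep1 r, ← Finset.mul_sum,
        ← Fintype.prod_sum (fun (i : {i // i ∈ S₁}) v => Ψ b₀ v₀ i v * θ i.1 a v)]
      -- evaluate each factor
      set t : Fin J → ℝ := fun i =>
        if i = j then θ j a v₀
        else if hiq : i.1 < K ∧ i.1 ≠ k.1 then
          (if a ⟨i.1, hiq.1⟩ = b₀ ⟨⟨i.1, hiq.1⟩,
              fun hc => hiq.2 (congrArg Fin.val hc)⟩ then (1:ℝ) else 0)
        else 1 with ht
      have hfac : ∀ i : {i // i ∈ S₁},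
          (∑ v, Ψ b₀ v₀ i v * θ i.1 a v) = t i.1 := by
        intro i
        by_cases hij : i.1 = j
        · have e1 : ∀ v, Ψ b₀ v₀ i v * θ i.1 a v
              = (if v = v₀ then θ i.1 a v else 0) := by
            intro v; rw [hΨ]; simp only [dif_pos hij, ite_mul, one_mul, zero_mul]
          rw [Finset.sum_congr rfl fun v _ => e1 v,
            Finset.sum_ite_eq' Finset.univ v₀ (fun v => θ i.1 a v)]
          rw [ht]
          simp only [hij, if_pos]
          simp [hij]
        · have hiq := hiK i hij
          set m : {m : Fin K // m ≠ k} := ⟨⟨i.1.1, hiq.1⟩,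
            fun hc => hiq.2 (congrArg Fin.val hc)⟩ with hm
          have hθeq : ∀ v, θ i.1 a v = θ ⟨m.1.1, hmQlt m⟩ (fun _ => a m.1) v := by
            intro v
            have h1 : i.1 = (⟨m.1.1, hmQlt m⟩ : Fin J) := by apply Fin.ext; rfl
            rw [← h1]
            apply congrFun
            apply hdep
            intro m' hm'
            have hco1 : co G i.1 = {m.1} := by
              have h2 : co G (⟨m.1.1, hmQlt m⟩ : Fin J) = {m.1} := by
                convert hfirst m.1 using 2
              rw [h1]; exact h2
            rw [hco1, Finset.mem_singleton] at hm'
            rw [hm']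
          have e1 : ∀ v, Ψ b₀ v₀ i v * θ i.1 a v
              = φ m (b₀ m) v * θ ⟨m.1.1, hmQlt m⟩ (fun _ => a m.1) v := by
            intro v
            rw [hΨ]
            simp only [dif_neg hij]
            rw [hθeq v]
          rw [Finset.sum_congr rfl fun v _ => e1 v, hφ m (b₀ m) (a m.1)]
          rw [ht]
          have hinej : i.1 ≠ j := hij
          simp only [if_neg hinej, dif_pos hiq]
          rfl
      rw [Finset.prod_congr rfl fun i _ => hfac i]
      -- now compute the product of t over S₁
      have hprodS₁ : (∏ i : {i // i ∈ S₁}, t i.1) = ∏ i ∈ S₁, t i :=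
        Finset.prod_coe_sort S₁ t
      rw [hprodS₁]
      have hQj : Disjoint Q ({j} : Finset (Fin J)) := by
        rw [Finset.disjoint_left]
        intro i hi1 hi2
        rw [hmemQ] at hi1
        rw [Finset.mem_singleton] at hi2
        subst hi2
        omega
      rw [hS₁, Finset.prod_union hQj, Finset.prod_singleton]
      have htj : t j = θ j a v₀ := by rw [ht]; simp
      have htQ : (∏ i ∈ Q, t i)
          = (if ∀ m : {m : Fin K // m ≠ k}, a m.1 = b₀ m then 1 else 0) := by
        have hb : (∏ i ∈ Q, t i) = ∏ m : {m : Fin K // m ≠ k},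
            (if a m.1 = b₀ m then (1:ℝ) else 0) := by
          refine Finset.prod_bij'
            (fun (i : Fin J) (hi : i ∈ Q) =>
              (⟨⟨i.1, ((hmemQ i).mp hi).1⟩,
                fun hc => ((hmemQ i).mp hi).2 (congrArg Fin.val hc)⟩ :
                  {m : Fin K // m ≠ k}))
            (fun (m : {m : Fin K // m ≠ k}) _ =>
              (⟨m.1.1, by have := m.1.isLt; omega⟩ : Fin J))
            (fun i hi => Finset.mem_univ _)
            (fun m _ => (hmemQ _).mpr ⟨by have := m.1.isLt; simpa using this,
              by simpa using fun hc => m.2 (Fin.ext hc)⟩)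
            (fun i hi => by apply Fin.ext; rfl)
            (fun m _ => by apply Subtype.ext; apply Fin.ext; rfl)
            ?_
          intro i hi
          have hiq := (hmemQ i).mp hi
          have hinej : i ≠ j := by
            intro hc; subst hc; omega
          rw [ht]
          simp only [if_neg hinej, dif_pos hiq]
        rw [hb]
        by_cases hall : ∀ m : {m : Fin K // m ≠ k}, a m.1 = b₀ m
        · rw [if_pos hall]
          rw [Finset.prod_congr rfl fun m _ => if_pos (hall m)]
          simp
        · rw [if_neg hall]
          obtain ⟨m, hm⟩ := not_forall.mp hall
          exact Finset.prod_eq_zero (Finset.mem_univ m) (if_neg hm)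
      rw [htj, htQ]
      ring
    -- linear independence of the selected columns of N
    have hNli : LinearIndependent ℝ
        (fun s : ({m : Fin K // m ≠ k} → Fin H) ⊕ Unit => Nᵀ (csel s)) := by
      rw [Fintype.linearIndependent_iff]
      intro g hg
      have hpt : ∀ r : {i // i ∈ S₁} → Fin V,
          ∑ s : ({m : Fin K // m ≠ k} → Fin H) ⊕ Unit, g s * N r (csel s) = 0 := by
        intro r
        have := congrFun hg r
        simpa [Finset.sum_apply, Matrix.transpose_apply] using this
      have hind : ∀ (b b₀ : {m : Fin K // m ≠ k} → Fin H) (hh : Fin H),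
          (if ∀ m : {m : Fin K // m ≠ k}, ext2 b hh m.1 = b₀ m then (1:ℝ) else 0)
          = (if b = b₀ then 1 else 0) := by
        intro b b₀ hh
        congr 1
        simp only [eq_iff_iff]
        constructor
        · intro hcc; funext m; rw [← hcc m, hext2m]
        · intro hcc m; rw [hext2m, hcc]
      have hrel : ∀ (b₀ : {m : Fin K // m ≠ k} → Fin H) (v₀ : Fin V),
          g (Sum.inl b₀) * (ν (ext2 b₀ h) * θ j (ext2 b₀ h) v₀)
          + g (Sum.inr ()) * (ν (ext2 bstar h') * θ j (ext2 bstar h') v₀)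
              * (if bstar = b₀ then 1 else 0) = 0 := by
        intro b₀ v₀
        have h0 : ∑ r : {i // i ∈ S₁} → Fin V, (∏ i : {i // i ∈ S₁}, Ψ b₀ v₀ i (r i)) *
            (∑ s : ({m : Fin K // m ≠ k} → Fin H) ⊕ Unit, g s * N r (csel s)) = 0 := by
          simp [hpt]
        have h1 : ∀ r : {i // i ∈ S₁} → Fin V,
            (∏ i : {i // i ∈ S₁}, Ψ b₀ v₀ i (r i)) *
              (∑ s : ({m : Fin K // m ≠ k} → Fin H) ⊕ Unit, g s * N r (csel s))
            = ∑ s : ({m : Fin K // m ≠ k} → Fin H) ⊕ Unit,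
                g s * ((∏ i : {i // i ∈ S₁}, Ψ b₀ v₀ i (r i)) * N r (csel s)) := by
          intro r
          rw [Finset.mul_sum]
          exact Finset.sum_congr rfl fun s _ => by ring
        rw [Finset.sum_congr rfl fun r _ => h1 r, Finset.sum_comm] at h0
        have h2 : ∀ s : ({m : Fin K // m ≠ k} → Fin H) ⊕ Unit,
            ∑ r : {i // i ∈ S₁} → Fin V,
              g s * ((∏ i : {i // i ∈ S₁}, Ψ b₀ v₀ i (r i)) * N r (csel s))
            = g s * (ν (csel s) * θ j (csel s) v₀ *
                (if ∀ m : {m : Fin K // m ≠ k}, (csel s) m.1 = b₀ m then 1 else 0)) := by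
          intro s
          rw [← Finset.mul_sum, hkey b₀ v₀ (csel s)]
        rw [Finset.sum_congr rfl fun s _ => h2 s, Fintype.sum_sum_type] at h0
        have h3 : ∀ b : {m : Fin K // m ≠ k} → Fin H,
            g (Sum.inl b) * (ν (csel (Sum.inl b)) * θ j (csel (Sum.inl b)) v₀ *
              (if ∀ m : {m : Fin K // m ≠ k}, (csel (Sum.inl b)) m.1 = b₀ m then 1 else 0))
            = (if b = b₀ then
                g (Sum.inl b) * (ν (ext2 b h) * θ j (ext2 b h) v₀) else 0) := by
          intro b
          have hcs : csel (Sum.inl b) = ext2 b h := rfl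
          rw [hcs, hind b b₀ h]
          by_cases hbb : b = b₀
          · rw [if_pos hbb, if_pos hbb]; ring
          · rw [if_neg hbb, if_neg hbb]; ring
        rw [Finset.sum_congr rfl fun b _ => h3 b,
          Finset.sum_ite_eq' Finset.univ b₀
            (fun b => g (Sum.inl b) * (ν (ext2 b h) * θ j (ext2 b h) v₀))] at h0
        simp only [Finset.mem_univ, if_true, Finset.univ_unique, Finset.sum_singleton] at h0
        have hcs2 : csel (Sum.inr ()) = ext2 bstar h' := rfl
        rw [hcs2, hind bstar b₀ h'] at h0
        calc g (Sum.inl b₀) * (ν (ext2 b₀ h) * θ j (ext2 b₀ h) v₀)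
            + g (Sum.inr ()) * (ν (ext2 bstar h') * θ j (ext2 bstar h') v₀)
              * (if bstar = b₀ then 1 else 0)
            = g (Sum.inl b₀) * (ν (ext2 b₀ h) * θ j (ext2 b₀ h) v₀)
            + g (Sum.inr ()) * (ν (ext2 bstar h') * θ j (ext2 bstar h') v₀
              * (if bstar = b₀ then 1 else 0)) := by ring
          _ = 0 := h0
      have hsumv : ∀ b₀ : {m : Fin K // m ≠ k} → Fin H,
          g (Sum.inl b₀) * ν (ext2 b₀ h)
          + g (Sum.inr ()) * ν (ext2 bstar h') * (if bstar = b₀ then 1 else 0) = 0 := by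
        intro b₀
        have h0 : ∑ v₀ : Fin V,
            (g (Sum.inl b₀) * (ν (ext2 b₀ h) * θ j (ext2 b₀ h) v₀)
            + g (Sum.inr ()) * (ν (ext2 bstar h') * θ j (ext2 bstar h') v₀)
              * (if bstar = b₀ then 1 else 0)) = 0 :=
          Finset.sum_eq_zero fun v₀ _ => hrel b₀ v₀
        rw [Finset.sum_add_distrib] at h0
        have e1 : ∑ v₀ : Fin V, g (Sum.inl b₀) * (ν (ext2 b₀ h) * θ j (ext2 b₀ h) v₀)
            = g (Sum.inl b₀) * ν (ext2 b₀ h) := by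
          rw [← Finset.mul_sum]
          have : ∑ v₀ : Fin V, ν (ext2 b₀ h) * θ j (ext2 b₀ h) v₀
              = ν (ext2 b₀ h) := by
            rw [← Finset.mul_sum, (hcpt j (ext2 b₀ h)).2, mul_one]
          rw [this]
        have e2 : ∑ v₀ : Fin V, g (Sum.inr ()) * (ν (ext2 bstar h') * θ j (ext2 bstar h') v₀)
              * (if bstar = b₀ then 1 else 0)
            = g (Sum.inr ()) * ν (ext2 bstar h') * (if bstar = b₀ then 1 else 0) := by
          have : ∀ v₀ : Fin V, g (Sum.inr ()) * (ν (ext2 bstar h') * θ j (ext2 bstar h') v₀)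
              * (if bstar = b₀ then 1 else 0)
              = (g (Sum.inr ()) * ν (ext2 bstar h') * (if bstar = b₀ then 1 else 0))
                * θ j (ext2 bstar h') v₀ := by intro v₀; ring
          rw [Finset.sum_congr rfl fun v₀ _ => this v₀, ← Finset.mul_sum,
            (hcpt j (ext2 bstar h')).2, mul_one]
        rw [e1, e2] at h0
        exact h0
      -- b₀ = bstar case: both coefficients vanish
      have hstar : g (Sum.inl bstar) = 0 ∧ g (Sum.inr ()) = 0 := by
        obtain ⟨vd, hvd⟩ := Function.ne_iff.mp hneq
        have hA := hrel bstar vd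
        have hB := hsumv bstar
        rw [if_pos rfl, mul_one] at hA hB
        rw [hextstar h, hextstar h'] at hA hB
        set ν1 := ν (Function.update a0 k h) with hν1
        set ν2 := ν (Function.update a0 k h') with hν2
        set g1 := g (Sum.inl bstar) with hg1
        set g2 := g (Sum.inr ()) with hg2
        have hzero : g1 * ν1 * (θ j (Function.update a0 k h) vd
            - θ j (Function.update a0 k h') vd) = 0 := by
          have : g1 * ν1 * (θ j (Function.update a0 k h) vd
              - θ j (Function.update a0 k h') vd)
              = (g1 * (ν1 * θ j (Function.update a0 k h) vd)
                + g2 * (ν2 * θ j (Function.update a0 k h') vd))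
              - (g1 * ν1 + g2 * ν2) * θ j (Function.update a0 k h') vd := by ring
          rw [this, hA, hB]
          ring
        have hg1z : g1 = 0 := by
          rcases mul_eq_zero.mp hzero with hc | hc
          · rcases mul_eq_zero.mp hc with hc2 | hc2
            · exact hc2
            · exact absurd hc2 (ne_of_gt (hpos _))
          · exact absurd hc (sub_ne_zero_of_ne hvd)
        have hg2z : g2 = 0 := by
          rw [hg1z, zero_mul, zero_add] at hB
          rcases mul_eq_zero.mp hB with hc | hc
          · exact hc
          · exact absurd hc (ne_of_gt (hpos _))
        exact ⟨hg1z, hg2z⟩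
      intro s
      rcases s with b | u
      · by_cases hbs : b = bstar
        · rw [hbs]; exact hstar.1
        · have hB := hsumv b
          rw [if_neg (fun hc => hbs hc.symm), mul_zero, add_zero] at hB
          rcases mul_eq_zero.mp hB with hc | hc
          · exact hc
          · exact absurd hc (ne_of_gt (hpos _))
      · cases u
        exact hstar.2
    have hcards : Fintype.card (({m : Fin K // m ≠ k} → Fin H) ⊕ Unit)
        = H ^ (K - 1) + 1 := by
      rw [Fintype.card_sum, hcardB]; simp
    have := card_le_rank_of_li N csel hNli
    rw [hcards] at this
    omega
  constructor
  · intro hlt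
    by_contra hknot
    exact absurd hlt (not_lt.mpr (hupper hknot))
  · exact hlower

end LBGM
end

section
/- Let two discrete latent bipartite graphical models on the same J observed variables (with the same V and H) be given, with K and K′ latent variables respectively, K ≥ 2 and K′ ≥ 2, and J ≥ 2·max(K, K′). Suppose each model satisfies: strictly positive latent pmf, Assumption 1, Assumption 2, the pure-child graph condition, and the pairwise rank condition. If for every subset S ⊆ [J] with |S| = 2·max(K, K′) the marginal distributions of Y_S under the two models coincide, then K = K′ and the graphs satisfy G′ = G·P for some K × K permutation matrix P. (This is the paper's Corollary 1: the bipartite graph is identifiable from the collection of order-2K marginal tensors.) -/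
open Matrix MeasureTheory

namespace LBGM

lemma sum_prod_pi {ι : Type*} [Fintype ι] [DecidableEq ι] {V : ℕ} (F : ι → Fin V → ℝ) :
    ∑ r : ι → Fin V, ∏ i, F i (r i) = ∏ i, ∑ v, F i v := by
  rw [Finset.prod_univ_sum]
  rw [Fintype.piFinset_univ]

lemma prod_boole_real {ι : Type*} [Fintype ι] (p : ι → Prop) [DecidablePred p] :
    (∏ i, (if p i then (1:ℝ) else 0)) = if ∀ i, p i then 1 else 0 := by
  rw [Finset.prod_boole]
  simp

lemma card_le_rank_of_linind {m n : Type*} [Fintype m] [Fintype n] [DecidableEq n]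
    {ι : Type*} [Fintype ι] (M : Matrix m n ℝ) (f : ι → n)
    (h : LinearIndependent ℝ (fun i => (fun r => M r (f i)))) :
    Fintype.card ι ≤ M.rank := by
  have hsub : Submodule.span ℝ (Set.range (fun i => (fun r => M r (f i)))) ≤
      LinearMap.range M.mulVecLin := by
    rw [Submodule.span_le]
    rintro - ⟨i, rfl⟩
    refine ⟨Pi.single (f i) 1, ?_⟩
    ext r
    simp [Matrix.mulVecLin, Matrix.mulVec, dotProduct, Pi.single_apply, mul_ite]
  have := Submodule.finrank_mono hsub
  rw [finrank_span_eq_card h] at this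
  exact this

lemma mulVecLin_injective_of_rank_eq_card {m n : Type*} [Fintype m] [Fintype n] [DecidableEq n]
    (M : Matrix m n ℝ) (h : M.rank = Fintype.card n) :
    LinearMap.ker M.mulVecLin = ⊥ := by
  have h1 := LinearMap.finrank_range_add_finrank_ker M.mulVecLin
  have h2 : Module.finrank ℝ (n → ℝ) = Fintype.card n := Module.finrank_fintype_fun_eq_card ℝ
  rw [h2] at h1
  have hr : Module.finrank ℝ ↥(LinearMap.range M.mulVecLin) = M.rank := rfl
  rw [hr, h] at h1
  have : Module.finrank ℝ ↥(LinearMap.ker M.mulVecLin) = 0 := by omega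
  rwa [Submodule.finrank_eq_zero] at this

section Formulas
variable {J K V H : ℕ}

lemma sum_ite_prod_two (S₁ S₂ : Finset (Fin J)) (hd : Disjoint S₁ S₂)
    (F : Fin J → Fin V → ℝ) (r : {j // j ∈ S₁} → Fin V) (c : {j // j ∈ S₂} → Fin V) :
    (∑ y : Fin J → Fin V,
      if (∀ j : {j // j ∈ S₁}, y j.1 = r j) ∧ (∀ j : {j // j ∈ S₂}, y j.1 = c j)
        then ∏ j, F j (y j) else 0)
    = ∏ j, (if h : j ∈ S₁ then F j (r ⟨j, h⟩)
        else if h : j ∈ S₂ then F j (c ⟨j, h⟩) else ∑ v, F j v) := by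
  classical
  have key : ∀ y : Fin J → Fin V,
      (if (∀ j : {j // j ∈ S₁}, y j.1 = r j) ∧ (∀ j : {j // j ∈ S₂}, y j.1 = c j)
        then ∏ j, F j (y j) else 0)
      = ∏ j, (if h : j ∈ S₁ then (if y j = r ⟨j, h⟩ then F j (y j) else 0)
          else if h : j ∈ S₂ then (if y j = c ⟨j, h⟩ then F j (y j) else 0)
          else F j (y j)) := by
    intro y
    by_cases hy : (∀ j : {j // j ∈ S₁}, y j.1 = r j) ∧ (∀ j : {j // j ∈ S₂}, y j.1 = c j)
    · rw [if_pos hy]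
      refine Finset.prod_congr rfl fun j _ => ?_
      by_cases h1 : j ∈ S₁
      · simp only [dif_pos h1, if_pos (hy.1 ⟨j, h1⟩)]
      · by_cases h2 : j ∈ S₂
        · simp only [dif_neg h1, dif_pos h2, if_pos (hy.2 ⟨j, h2⟩)]
        · simp only [dif_neg h1, dif_neg h2]
    · rw [if_neg hy]
      rw [not_and_or] at hy
      rcases hy with hy | hy
      · push_neg at hy
        obtain ⟨j, hj⟩ := hy
        refine (Finset.prod_eq_zero (Finset.mem_univ j.1) ?_).symm
        simp only [dif_pos j.2]
        rw [if_neg]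
        intro hcontra
        exact hj (hcontra.trans (congrArg r (Subtype.coe_eta j j.2)))
      · push_neg at hy
        obtain ⟨j, hj⟩ := hy
        have hj1 : j.1 ∉ S₁ := fun h => (Finset.disjoint_left.mp hd h) j.2
        refine (Finset.prod_eq_zero (Finset.mem_univ j.1) ?_).symm
        simp only [dif_neg hj1, dif_pos j.2]
        rw [if_neg]
        intro hcontra
        exact hj (hcontra.trans (congrArg c (Subtype.coe_eta j j.2)))
  rw [Finset.sum_congr rfl fun y _ => key y]
  have := sum_prod_pi (V := V) (ι := Fin J) (fun j v =>
      if h : j ∈ S₁ then (if v = r ⟨j, h⟩ then F j v else 0)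
      else if h : j ∈ S₂ then (if v = c ⟨j, h⟩ then F j v else 0)
      else F j v)
  rw [this]
  refine Finset.prod_congr rfl fun j _ => ?_
  by_cases h1 : j ∈ S₁
  · simp only [dif_pos h1]
    rw [Finset.sum_ite_eq' Finset.univ (r ⟨j, h1⟩) (F j)]
    simp
  · by_cases h2 : j ∈ S₂
    · simp only [dif_neg h1, dif_pos h2]
      rw [Finset.sum_ite_eq' Finset.univ (c ⟨j, h2⟩) (F j)]
      simp
    · simp only [dif_neg h1, dif_neg h2]

end Formulas
section Formulas2
variable {J K V H : ℕ}

lemma prod_subtype_eq_dite (S : Finset (Fin J)) (F : Fin J → Fin V → ℝ)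
    (r : {j // j ∈ S} → Fin V) :
    (∏ j : {j // j ∈ S}, F j.1 (r j)) = ∏ j ∈ S, (if h : j ∈ S then F j (r ⟨j, h⟩) else 1) := by
  classical
  rw [← Finset.prod_attach S (fun j => if h : j ∈ S then F j (r ⟨j, h⟩) else 1)]
  rw [Finset.univ_eq_attach]
  refine Finset.prod_congr rfl fun x _ => ?_
  rw [dif_pos x.2, Subtype.coe_eta]

lemma unfoldT_apply (ν : (Fin K → Fin H) → ℝ) (θ : Fin J → (Fin K → Fin H) → Fin V → ℝ)
    (hcpt : IsCPT θ) (S₁ S₂ : Finset (Fin J)) (hd : Disjoint S₁ S₂)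
    (r : {j // j ∈ S₁} → Fin V) (c : {j // j ∈ S₂} → Fin V) :
    unfoldT ν θ S₁ S₂ r c
      = ∑ a : Fin K → Fin H, ν a * ((∏ j : {j // j ∈ S₁}, θ j.1 a (r j)) *
          (∏ j : {j // j ∈ S₂}, θ j.1 a (c j))) := by
  classical
  unfold unfoldT jointP
  simp only [Matrix.of_apply]
  have step1 : ∀ y : Fin J → Fin V,
      (if (∀ j : {j // j ∈ S₁}, y j.1 = r j) ∧ (∀ j : {j // j ∈ S₂}, y j.1 = c j)
        then ∑ a : Fin K → Fin H, ν a * ∏ j, θ j a (y j) else 0)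
      = ∑ a : Fin K → Fin H,
        (if (∀ j : {j // j ∈ S₁}, y j.1 = r j) ∧ (∀ j : {j // j ∈ S₂}, y j.1 = c j)
          then ν a * ∏ j, θ j a (y j) else 0) := by
    intro y; split <;> simp
  rw [Finset.sum_congr rfl fun y _ => step1 y, Finset.sum_comm]
  refine Finset.sum_congr rfl fun a _ => ?_
  have step2 : ∀ y : Fin J → Fin V,
      (if (∀ j : {j // j ∈ S₁}, y j.1 = r j) ∧ (∀ j : {j // j ∈ S₂}, y j.1 = c j)
        then ν a * ∏ j, θ j a (y j) else 0)
      = ν a * (if (∀ j : {j // j ∈ S₁}, y j.1 = r j) ∧ (∀ j : {j // j ∈ S₂}, y j.1 = c j)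
        then ∏ j, θ j a (y j) else 0) := by
    intro y; split <;> simp
  rw [Finset.sum_congr rfl fun y _ => step2 y, ← Finset.mul_sum]
  congr 1
  rw [sum_ite_prod_two S₁ S₂ hd (fun j => θ j a) r c]
  rw [← Finset.prod_mul_prod_compl (S₁ ∪ S₂)]
  have hcompl : ∀ j ∈ (S₁ ∪ S₂)ᶜ,
      (if h : j ∈ S₁ then θ j a (r ⟨j, h⟩)
        else if h : j ∈ S₂ then θ j a (c ⟨j, h⟩) else ∑ v, θ j a v) = 1 := by
    intro j hj
    rw [Finset.mem_compl, Finset.mem_union] at hj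
    push_neg at hj
    rw [dif_neg hj.1, dif_neg hj.2]
    exact (hcpt j a).2
  rw [Finset.prod_congr rfl hcompl, Finset.prod_const_one, mul_one, Finset.prod_union hd]
  congr 1
  · rw [prod_subtype_eq_dite S₁ (fun j v => θ j a v) r]
    refine Finset.prod_congr rfl fun j hj => ?_
    rw [dif_pos hj, dif_pos hj]
  · rw [prod_subtype_eq_dite S₂ (fun j v => θ j a v) c]
    refine Finset.prod_congr rfl fun j hj => ?_
    have hj1 : j ∉ S₁ := fun h => (Finset.disjoint_left.mp hd h) hj
    rw [dif_neg hj1, dif_pos hj, dif_pos hj]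

lemma marginalP_eq_unfold (ν : (Fin K → Fin H) → ℝ) (θ : Fin J → (Fin K → Fin H) → Fin V → ℝ)
    (S : Finset (Fin J)) (r : {j // j ∈ S} → Fin V) :
    marginalP ν θ S r = unfoldT ν θ S ∅ r
      (fun j => absurd j.2 (Finset.notMem_empty j.1)) := by
  unfold marginalP unfoldT
  simp only [Matrix.of_apply]
  refine Finset.sum_congr rfl fun y _ => ?_
  refine if_congr ?_ rfl rfl
  constructor
  · intro h; exact ⟨h, fun j => absurd j.2 (Finset.notMem_empty j.1)⟩
  · intro h; exact h.1

lemma marginalP_apply (ν : (Fin K → Fin H) → ℝ) (θ : Fin J → (Fin K → Fin H) → Fin V → ℝ)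
    (hcpt : IsCPT θ) (S : Finset (Fin J)) (r : {j // j ∈ S} → Fin V) :
    marginalP ν θ S r = ∑ a : Fin K → Fin H, ν a * ∏ j : {j // j ∈ S}, θ j.1 a (r j) := by
  rw [marginalP_eq_unfold, unfoldT_apply ν θ hcpt S ∅ (Finset.disjoint_empty_right S)]
  refine Finset.sum_congr rfl fun a _ => ?_
  have : (∏ j : {j // j ∈ (∅ : Finset (Fin J))},
      θ j.1 a ((fun j => absurd j.2 (Finset.notMem_empty j.1)) j)) = 1 := by
    have : IsEmpty {j // j ∈ (∅ : Finset (Fin J))} := by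
      constructor; intro j; exact absurd j.2 (Finset.notMem_empty j.1)
    exact Finset.prod_of_isEmpty _
  rw [this, mul_one]

/-- marginal with full-function argument -/
noncomputable def mm (ν : (Fin K → Fin H) → ℝ) (θ : Fin J → (Fin K → Fin H) → Fin V → ℝ)
    (S : Finset (Fin J)) (r : Fin J → Fin V) : ℝ :=
  ∑ a : Fin K → Fin H, ν a * ∏ j ∈ S, θ j a (r j)

lemma mm_eq_marginal (ν : (Fin K → Fin H) → ℝ) (θ : Fin J → (Fin K → Fin H) → Fin V → ℝ)
    (hcpt : IsCPT θ) (S : Finset (Fin J)) (r : Fin J → Fin V) :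
    mm ν θ S r = marginalP ν θ S (fun j => r j.1) := by
  rw [marginalP_apply ν θ hcpt]
  refine Finset.sum_congr rfl fun a _ => ?_
  congr 1
  rw [Finset.univ_eq_attach, Finset.prod_attach S (fun j => θ j a (r j))]

lemma mm_insert_sum (ν : (Fin K → Fin H) → ℝ) (θ : Fin J → (Fin K → Fin H) → Fin V → ℝ)
    (hcpt : IsCPT θ) (S : Finset (Fin J)) (j : Fin J) (hj : j ∉ S) (r : Fin J → Fin V) :
    ∑ v : Fin V, mm ν θ (insert j S) (Function.update r j v) = mm ν θ S r := by
  unfold mm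
  rw [Finset.sum_comm]
  refine Finset.sum_congr rfl fun a _ => ?_
  have hins : ∀ v : Fin V, (∏ i ∈ insert j S, θ i a (Function.update r j v i))
      = θ j a v * ∏ i ∈ S, θ i a (r i) := by
    intro v
    rw [Finset.prod_insert hj, Function.update_self]
    congr 1
    refine Finset.prod_congr rfl fun i hi => ?_
    have hij : i ≠ j := fun h => hj (h ▸ hi)
    rw [Function.update_of_ne hij _ _]
  simp only [hins]
  rw [← Finset.mul_sum, ← Finset.sum_mul, (hcpt j a).2]
  ring

end Formulas2
section Chunk4
variable {J K V H : ℕ}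

lemma unfoldT_eq_mm (ν : (Fin K → Fin H) → ℝ) (θ : Fin J → (Fin K → Fin H) → Fin V → ℝ)
    (hcpt : IsCPT θ) (S₁ S₂ : Finset (Fin J)) (hd : Disjoint S₁ S₂) (v0 : Fin V)
    (r : {j // j ∈ S₁} → Fin V) (c : {j // j ∈ S₂} → Fin V) :
    unfoldT ν θ S₁ S₂ r c = mm ν θ (S₁ ∪ S₂)
      (fun j => if h : j ∈ S₁ then r ⟨j, h⟩ else if h : j ∈ S₂ then c ⟨j, h⟩ else v0) := by
  classical
  rw [unfoldT_apply ν θ hcpt S₁ S₂ hd]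
  unfold mm
  refine Finset.sum_congr rfl fun a _ => ?_
  congr 1
  set mrg : Fin J → Fin V :=
    fun j => if h : j ∈ S₁ then r ⟨j, h⟩ else if h : j ∈ S₂ then c ⟨j, h⟩ else v0 with hmrg
  rw [Finset.prod_union hd]
  congr 1
  · rw [Finset.univ_eq_attach, ← Finset.prod_attach S₁ (fun j => θ j a (mrg j))]
    refine Finset.prod_congr rfl fun x _ => ?_
    congr 1
    rw [hmrg]; simp only [dif_pos x.2, Subtype.coe_eta]
  · rw [Finset.univ_eq_attach, ← Finset.prod_attach S₂ (fun j => θ j a (mrg j))]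
    refine Finset.prod_congr rfl fun x _ => ?_
    congr 1
    have hx1 : x.1 ∉ S₁ := fun h => (Finset.disjoint_left.mp hd h) x.2
    rw [hmrg]; simp only [dif_neg hx1, dif_pos x.2, Subtype.coe_eta]

variable [NeZero H]

lemma rank_le_of_co_subset (G : Fin J → Fin K → Bool) (ν : (Fin K → Fin H) → ℝ)
    (θ : Fin J → (Fin K → Fin H) → Fin V → ℝ) (hdep : DependsOnlyOnCo G θ)
    (hcpt : IsCPT θ) (S₁ S₂ : Finset (Fin J)) (hd : Disjoint S₁ S₂)
    (B : Finset (Fin K)) (hB : ∀ j ∈ S₁, co G j ⊆ B) :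
    (unfoldT ν θ S₁ S₂).rank ≤ H ^ B.card := by
  classical
  set X : Matrix ({j // j ∈ S₁} → Fin V) ({k // k ∈ B} → Fin H) ℝ := cpt θ S₁ B with hX
  set Y : Matrix ({k // k ∈ B} → Fin H) ({j // j ∈ S₂} → Fin V) ℝ := Matrix.of fun g c =>
    ∑ a ∈ Finset.univ.filter (fun a : Fin K → Fin H => (fun k : {k // k ∈ B} => a k.1) = g),
      ν a * ∏ j : {j // j ∈ S₂}, θ j.1 a (c j) with hY
  have hfact : unfoldT ν θ S₁ S₂ = X * Y := by
    ext r c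
    rw [unfoldT_apply ν θ hcpt S₁ S₂ hd, Matrix.mul_apply]
    have hterm : ∀ g : {k // k ∈ B} → Fin H, X r g * Y g c
        = ∑ a ∈ Finset.univ.filter (fun a : Fin K → Fin H => (fun k : {k // k ∈ B} => a k.1) = g),
            ν a * ((∏ j : {j // j ∈ S₁}, θ j.1 a (r j)) *
              (∏ j : {j // j ∈ S₂}, θ j.1 a (c j))) := by
      intro g
      rw [hY]
      simp only [Matrix.of_apply]
      rw [Finset.mul_sum]
      refine Finset.sum_congr rfl fun a ha => ?_
      rw [Finset.mem_filter] at ha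
      have hXa : X r g = ∏ j : {j // j ∈ S₁}, θ j.1 a (r j) := by
        rw [hX]
        unfold cpt
        simp only [Matrix.of_apply]
        refine Finset.prod_congr rfl fun j _ => ?_
        have : θ j.1 (extendA B g) = θ j.1 a := by
          refine hdep j.1 _ _ fun k hk => ?_
          have hkB : k ∈ B := hB j.1 j.2 hk
          unfold extendA
          rw [dif_pos hkB, ← ha.2]
        rw [this]
      rw [hXa]; ring
    rw [Finset.sum_congr rfl fun g _ => hterm g]
    rw [Finset.sum_fiberwise Finset.univ
      (fun a : Fin K → Fin H => (fun k : {k // k ∈ B} => a k.1))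
      (fun a => ν a * ((∏ j : {j // j ∈ S₁}, θ j.1 a (r j)) *
        (∏ j : {j // j ∈ S₂}, θ j.1 a (c j))))]
  rw [hfact]
  refine le_trans (Matrix.rank_mul_le_left X Y) (le_trans (Matrix.rank_le_card_width X) ?_)
  rw [Fintype.card_fun, Fintype.card_coe, Fintype.card_fin]

lemma colMat_leftinv (G : Fin J → Fin K → Bool)
    (θ : Fin J → (Fin K → Fin H) → Fin V → ℝ) (hdep : DependsOnlyOnCo G θ)
    (hA1 : Assumption1 G θ) (p : Fin J) (k : Fin K) (hco : co G p = {k}) :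
    ∃ L : Fin H → Fin V → ℝ, ∀ (h : Fin H) (a : Fin K → Fin H),
      (∑ v, L h v * θ p a v) = if a k = h then 1 else 0 := by
  classical
  set M := cpt θ {p} (co G p) with hM
  have hcard1 : (co G p).card = 1 := by rw [hco]; simp
  have hrank : M.rank = H := hA1 p hcard1
  have hcardC : Fintype.card ({k' // k' ∈ co G p} → Fin H) = H := by
    rw [Fintype.card_fun, Fintype.card_coe, Fintype.card_fin, hcard1, pow_one]
  have hker : LinearMap.ker M.mulVecLin = ⊥ :=
    mulVecLin_injective_of_rank_eq_card M (hrank.trans hcardC.symm)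
  obtain ⟨g, hg⟩ := LinearMap.exists_leftInverse_of_injective M.mulVecLin hker
  have hgM : ∀ x, g (M.mulVecLin x) = x := fun x => by
    simpa using LinearMap.congr_fun hg x
  let pelem : {j // j ∈ ({p} : Finset (Fin J))} := ⟨p, Finset.mem_singleton_self p⟩
  let kelem : {k' // k' ∈ co G p} :=
    ⟨k, by rw [hco]; exact Finset.mem_singleton_self k⟩
  have hsub : ∀ j : {j // j ∈ ({p} : Finset (Fin J))}, j = pelem :=
    fun j => Subtype.ext (Finset.mem_singleton.mp j.2)
  refine ⟨fun h v => g ((Pi.single ((fun _ => v) :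
      {j // j ∈ ({p} : Finset (Fin J))} → Fin V) (1:ℝ) :
      ({j // j ∈ ({p} : Finset (Fin J))} → Fin V) → ℝ)) (fun _ => h), ?_⟩
  intro h a
  set cfa : {k' // k' ∈ co G p} → Fin H := fun _ => a k with hcfa
  have stepA : M.mulVecLin (Pi.single cfa 1) = fun y => θ p a (y pelem) := by
    funext y
    simp only [Matrix.mulVecLin_apply, Matrix.mulVec, dotProduct]
    rw [Finset.sum_eq_single cfa]
    · rw [Pi.single_eq_same, mul_one]
      show cpt θ {p} (co G p) y cfa = θ p a (y pelem)
      unfold cpt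
      simp only [Matrix.of_apply]
      rw [Fintype.prod_eq_single pelem (fun x hx => absurd (hsub x) hx)]
      show θ p (extendA (co G p) cfa) (y pelem) = θ p a (y pelem)
      have : θ p (extendA (co G p) cfa) = θ p a := by
        refine hdep p _ _ fun k' hk' => ?_
        unfold extendA
        rw [dif_pos hk']
        show a k = a k'
        exact congrArg a (Finset.mem_singleton.mp (hco ▸ hk')).symm
      rw [this]
    · intro b _ hb
      rw [Pi.single_eq_of_ne hb, mul_zero]
    · intro hc; exact absurd (Finset.mem_univ cfa) hc
  have hone : ∀ (v : Fin V) (y : {j // j ∈ ({p} : Finset (Fin J))} → Fin V),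
      ((Pi.single ((fun _ => v) : {j // j ∈ ({p} : Finset (Fin J))} → Fin V) (1:ℝ) :
        ({j // j ∈ ({p} : Finset (Fin J))} → Fin V) → ℝ)) y
        = if v = y pelem then 1 else 0 := by
    intro v y
    rw [Pi.single_apply]
    by_cases hv : v = y pelem
    · rw [if_pos hv, if_pos]
      funext j; rw [hsub j, ← hv]
    · rw [if_neg hv, if_neg]
      intro hcontra
      exact hv (congrFun hcontra pelem).symm
  have stepB : (fun y : {j // j ∈ ({p} : Finset (Fin J))} → Fin V => θ p a (y pelem))
      = ∑ v : Fin V, θ p a v • (Pi.single ((fun _ => v) :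
          {j // j ∈ ({p} : Finset (Fin J))} → Fin V) (1:ℝ) :
          ({j // j ∈ ({p} : Finset (Fin J))} → Fin V) → ℝ) := by
    funext y
    rw [Finset.sum_apply]
    have hterm : ∀ v : Fin V,
        (θ p a v • (Pi.single ((fun _ => v) :
          {j // j ∈ ({p} : Finset (Fin J))} → Fin V) (1:ℝ) :
          ({j // j ∈ ({p} : Finset (Fin J))} → Fin V) → ℝ)) y
        = if v = y pelem then θ p a v else 0 := by
      intro v
      rw [Pi.smul_apply, hone v y, smul_eq_mul]
      by_cases hv : v = y pelem
      · rw [if_pos hv, if_pos hv, mul_one]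
      · rw [if_neg hv, if_neg hv, mul_zero]
    rw [Finset.sum_congr rfl fun v _ => hterm v,
      Finset.sum_ite_eq' Finset.univ (y pelem) (θ p a)]
    simp
  have stepC := congrFun (congrArg (⇑g) stepA) (fun _ => h)
  have lhs : g (fun y => θ p a (y pelem)) (fun _ => h)
      = ∑ v, g ((Pi.single ((fun _ => v) :
          {j // j ∈ ({p} : Finset (Fin J))} → Fin V) (1:ℝ) :
          ({j // j ∈ ({p} : Finset (Fin J))} → Fin V) → ℝ)) (fun _ => h) * θ p a v := by
    rw [stepB, map_sum, Finset.sum_apply]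
    refine Finset.sum_congr rfl fun v _ => ?_
    rw [LinearMap.map_smul, Pi.smul_apply, smul_eq_mul, mul_comm]
  have hfin : (Pi.single cfa (1:ℝ) : ({k' // k' ∈ co G p} → Fin H) → ℝ) (fun _ => h) = if a k = h then 1 else 0 := by
    rw [Pi.single_apply]
    by_cases hh : a k = h
    · rw [if_pos, if_pos hh]; funext _; exact hh.symm
    · rw [if_neg, if_neg hh]
      intro hcontra
      exact hh (congrFun hcontra kelem).symm
  have final : ∑ v, g ((Pi.single ((fun _ => v) :
      {j // j ∈ ({p} : Finset (Fin J))} → Fin V) (1:ℝ) :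
      ({j // j ∈ ({p} : Finset (Fin J))} → Fin V) → ℝ)) (fun _ => h) * θ p a v
      = if a k = h then 1 else 0 := by
    rw [← lhs, ← stepC, hgM (Pi.single cfa 1)]
    exact hfin
  exact final

end Chunk4
section Chunk5
variable {J K V H : ℕ} [NeZero H]

/-- rows `r`, columns `a`: `ν a ∏_{j∈S₁} θ_j(r_j | a)` -/
noncomputable def Amat (ν : (Fin K → Fin H) → ℝ) (θ : Fin J → (Fin K → Fin H) → Fin V → ℝ)
    (S₁ : Finset (Fin J)) : Matrix ({j // j ∈ S₁} → Fin V) (Fin K → Fin H) ℝ :=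
  Matrix.of fun r a => ν a * ∏ j : {j // j ∈ S₁}, θ j.1 a (r j)

noncomputable def Bmat (θ : Fin J → (Fin K → Fin H) → Fin V → ℝ) (S₂ : Finset (Fin J)) :
    Matrix (Fin K → Fin H) ({j // j ∈ S₂} → Fin V) ℝ :=
  Matrix.of fun a c => ∏ j : {j // j ∈ S₂}, θ j.1 a (c j)

lemma unfoldT_factor (ν : (Fin K → Fin H) → ℝ) (θ : Fin J → (Fin K → Fin H) → Fin V → ℝ)
    (hcpt : IsCPT θ) (S₁ S₂ : Finset (Fin J)) (hd : Disjoint S₁ S₂) :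
    unfoldT ν θ S₁ S₂ = Amat ν θ S₁ * Bmat θ S₂ := by
  ext r c
  rw [unfoldT_apply ν θ hcpt S₁ S₂ hd, Matrix.mul_apply]
  refine Finset.sum_congr rfl fun a _ => ?_
  show ν a * _ = Amat ν θ S₁ r a * Bmat θ S₂ a c
  unfold Amat Bmat
  simp only [Matrix.of_apply]
  ring

lemma Bmat_rightinv (G : Fin J → Fin K → Bool) (θ : Fin J → (Fin K → Fin H) → Fin V → ℝ)
    (hdep : DependsOnlyOnCo G θ) (hA1 : Assumption1 G θ)
    (q : Fin K → Fin J) (hq : ∀ k, co G (q k) = {k}) :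
    ∃ R : Matrix ({j // j ∈ Finset.image q Finset.univ} → Fin V) (Fin K → Fin H) ℝ,
      Bmat θ (Finset.image q Finset.univ) * R = 1 := by
  classical
  choose L hL using fun k => colMat_leftinv G θ hdep hA1 (q k) k (hq k)
  have hinj : Function.Injective q := by
    intro k k' h
    have : ({k} : Finset (Fin K)) = {k'} := by rw [← hq k, ← hq k', h]
    exact Finset.singleton_injective this
  set S₂ := Finset.image q Finset.univ with hS₂
  have hmem : ∀ k, q k ∈ S₂ := fun k => Finset.mem_image_of_mem q (Finset.mem_univ k)
  let qe : Fin K ≃ {j // j ∈ S₂} := Equiv.ofBijective (fun k => ⟨q k, hmem k⟩)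
    (by
      constructor
      · intro k k' h
        exact hinj (congrArg Subtype.val h)
      · intro x
        obtain ⟨k, -, hk⟩ := Finset.mem_image.mp x.2
        exact ⟨k, Subtype.ext hk⟩)
  refine ⟨Matrix.of fun c a' => ∏ k, L k (a' k) (c (qe k)), ?_⟩
  ext a a'
  rw [Matrix.mul_apply]
  have hrow : ∀ c : {j // j ∈ S₂} → Fin V,
      Bmat θ S₂ a c = ∏ k, θ (q k) a (c (qe k)) := by
    intro c
    show (∏ j : {j // j ∈ S₂}, θ j.1 a (c j)) = _
    rw [← Equiv.prod_comp qe (fun j => θ j.1 a (c j))]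
    rfl
  have hterm : ∀ c : {j // j ∈ S₂} → Fin V,
      Bmat θ S₂ a c * (Matrix.of fun c a' => ∏ k, L k (a' k) (c (qe k))) c a'
      = ∏ k, (θ (q k) a (c (qe k)) * L k (a' k) (c (qe k))) := by
    intro c
    rw [hrow c]
    simp only [Matrix.of_apply]
    rw [← Finset.prod_mul_distrib]
  rw [Finset.sum_congr rfl fun c _ => hterm c]
  have hchg : ∑ c : {j // j ∈ S₂} → Fin V, ∏ k, (θ (q k) a (c (qe k)) * L k (a' k) (c (qe k)))
      = ∑ d : Fin K → Fin V, ∏ k, (θ (q k) a (d k) * L k (a' k) (d k)) := by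
    refine Fintype.sum_equiv (Equiv.arrowCongr qe.symm (Equiv.refl (Fin V)))
      _ _ fun c => ?_
    refine Finset.prod_congr rfl fun k _ => ?_
    congr 2 <;>
    · simp [Equiv.arrowCongr]
  rw [hchg, sum_prod_pi (fun k v => θ (q k) a v * L k (a' k) v)]
  have hfac : ∀ k, (∑ v, θ (q k) a v * L k (a' k) v) = if a k = a' k then 1 else 0 := by
    intro k
    rw [Finset.sum_congr rfl fun v _ => mul_comm (θ (q k) a v) (L k (a' k) v)]
    exact hL k (a' k) a
  rw [Finset.prod_congr rfl fun k _ => hfac k, prod_boole_real (fun k => a k = a' k)]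
  rw [Matrix.one_apply]
  by_cases h : a = a'
  · rw [if_pos h, if_pos (fun k => congrFun h k)]
  · rw [if_neg h, if_neg (fun hc => h (funext hc))]

lemma rank_Amat_le_unfoldT (G : Fin J → Fin K → Bool) (ν : (Fin K → Fin H) → ℝ)
    (θ : Fin J → (Fin K → Fin H) → Fin V → ℝ)
    (hdep : DependsOnlyOnCo G θ) (hcpt : IsCPT θ) (hA1 : Assumption1 G θ)
    (S₁ : Finset (Fin J)) (q : Fin K → Fin J) (hq : ∀ k, co G (q k) = {k})
    (hd : Disjoint S₁ (Finset.image q Finset.univ)) :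
    (Amat ν θ S₁).rank ≤ (unfoldT ν θ S₁ (Finset.image q Finset.univ)).rank := by
  obtain ⟨R, hR⟩ := Bmat_rightinv G θ hdep hA1 q hq
  have : unfoldT ν θ S₁ (Finset.image q Finset.univ) * R = Amat ν θ S₁ := by
    rw [unfoldT_factor ν θ hcpt S₁ _ hd, Matrix.mul_assoc, hR, Matrix.mul_one]
  rw [← this]
  exact Matrix.rank_mul_le_left _ R

lemma rank_cpt_le_Amat (G : Fin J → Fin K → Bool) (ν : (Fin K → Fin H) → ℝ)
    (θ : Fin J → (Fin K → Fin H) → Fin V → ℝ) (hdep : DependsOnlyOnCo G θ)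
    (hpos : ∀ a, 0 < ν a) (S₁ : Finset (Fin J)) (U : Finset (Fin K))
    (hU : ∀ j ∈ S₁, co G j ⊆ U) :
    (cpt θ S₁ U).rank ≤ (Amat ν θ S₁).rank := by
  classical
  set E : Matrix (Fin K → Fin H) ({k // k ∈ U} → Fin H) ℝ :=
    Matrix.of fun a s => if a = extendA U s then (ν a)⁻¹ else 0 with hE
  have hfact : cpt θ S₁ U = Amat ν θ S₁ * E := by
    ext r s
    rw [Matrix.mul_apply]
    have : ∀ a, Amat ν θ S₁ r a * E a s
        = if a = extendA U s then Amat ν θ S₁ r a * (ν a)⁻¹ else 0 := by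
      intro a
      rw [hE]
      simp only [Matrix.of_apply]
      split <;> simp
    rw [Finset.sum_congr rfl fun a _ => this a, Finset.sum_ite_eq' Finset.univ (extendA U s)
      (fun a => Amat ν θ S₁ r a * (ν a)⁻¹)]
    rw [if_pos (Finset.mem_univ _)]
    show cpt θ S₁ U r s = ν _ * (∏ j : {j // j ∈ S₁}, θ j.1 (extendA U s) (r j)) * (ν _)⁻¹
    rw [mul_comm (ν (extendA U s)) _, mul_assoc, mul_inv_cancel₀ (ne_of_gt (hpos _)), mul_one]
    rfl
  rw [hfact]
  exact Matrix.rank_mul_le_left _ E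

lemma pair_lower (G : Fin J → Fin K → Bool) (ν : (Fin K → Fin H) → ℝ)
    (θ : Fin J → (Fin K → Fin H) → Fin V → ℝ)
    (hdep : DependsOnlyOnCo G θ) (hcpt : IsCPT θ) (hpos : ∀ a, 0 < ν a)
    (hA1 : Assumption1 G θ) (hpr : PairwiseRank G θ)
    (j₁ j₂ : Fin J) (hne : j₁ ≠ j₂) (hns : ¬ ∃ k : Fin K, co G j₁ ∪ co G j₂ = {k})
    (q : Fin K → Fin J) (hq : ∀ k, co G (q k) = {k})
    (hd : Disjoint ({j₁, j₂} : Finset (Fin J)) (Finset.image q Finset.univ)) :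
    H < (unfoldT ν θ ({j₁, j₂} : Finset (Fin J)) (Finset.image q Finset.univ)).rank := by
  have h1 := hpr j₁ j₂ hne hns
  have h2 : (cpt θ ({j₁, j₂} : Finset (Fin J)) (co G j₁ ∪ co G j₂)).rank
      ≤ (Amat ν θ ({j₁, j₂} : Finset (Fin J))).rank := by
    refine rank_cpt_le_Amat G ν θ hdep hpos _ _ fun j hj => ?_
    rcases Finset.mem_insert.mp hj with h | h
    · subst h; exact Finset.subset_union_left
    · rw [Finset.mem_singleton.mp h]; exact Finset.subset_union_right
  have h3 := rank_Amat_le_unfoldT G ν θ hdep hcpt hA1 ({j₁, j₂} : Finset (Fin J)) q hq hd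
  omega

end Chunk5
section Chunk6
variable {J K V H : ℕ} [NeZero H]

lemma graph_lower (G : Fin J → Fin K → Bool) (ν : (Fin K → Fin H) → ℝ)
    (θ : Fin J → (Fin K → Fin H) → Fin V → ℝ)
    (hdep : DependsOnlyOnCo G θ) (hcpt : IsCPT θ) (hpos : ∀ a, 0 < ν a)
    (hA1 : Assumption1 G θ) (hA2 : Assumption2 G θ)
    (j0 : Fin J) (k0 : Fin K) (hk0 : k0 ∈ co G j0)
    (pk : {b : Fin K // b ≠ k0} → Fin J)
    (hpk : ∀ b, co G (pk b) = {b.1})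
    (F : Finset (Fin J)) (hFmem : ∀ b, pk b ∈ F)
    (hFonly : ∀ j ∈ F, ∃ b, pk b = j) (hj0F : j0 ∉ F) :
    H ^ (K - 1) < (Amat ν θ (insert j0 F)).rank := by
  classical
  have hpkinj : Function.Injective pk := by
    intro b b' h
    have : ({b.1} : Finset (Fin K)) = {b'.1} := by rw [← hpk b, ← hpk b', h]
    exact Subtype.ext (Finset.singleton_injective this)
  have hpkj0 : ∀ b, pk b ≠ j0 := fun b h => hj0F (h ▸ hFmem b)
  let j0e : {j // j ∈ insert j0 F} := ⟨j0, Finset.mem_insert_self j0 F⟩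
  let pe : {b : Fin K // b ≠ k0} → {j // j ∈ insert j0 F} :=
    fun b => ⟨pk b, Finset.mem_insert_of_mem (hFmem b)⟩
  have hpeinj : Function.Injective pe :=
    fun b b' h => hpkinj (congrArg Subtype.val h)
  have hpej0 : ∀ b, pe b ≠ j0e := fun b h => hpkj0 b (congrArg Subtype.val h)
  have hinv : ∀ i : {j // j ∈ insert j0 F}, i ≠ j0e → ∃ b, pe b = i := by
    intro i hi
    rcases Finset.mem_insert.mp i.2 with h | h
    · exact absurd (Subtype.ext h) hi
    · obtain ⟨b, hb⟩ := hFonly i.1 h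
      exact ⟨b, Subtype.ext hb⟩
  have hpart : (Finset.univ : Finset {j // j ∈ insert j0 F})
      = insert j0e (Finset.image pe Finset.univ) := by
    ext i
    simp only [Finset.mem_univ, true_iff, Finset.mem_insert, Finset.mem_image]
    by_cases hi : i = j0e
    · exact Or.inl hi
    · obtain ⟨b, hb⟩ := hinv i hi
      exact Or.inr ⟨b, trivial, hb⟩
  have hj0im : j0e ∉ Finset.image pe Finset.univ := by
    intro h
    obtain ⟨b, -, hb⟩ := Finset.mem_image.mp h
    exact hpej0 b hb
  have hsplit : ∀ f : {j // j ∈ insert j0 F} → ℝ,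
      (∏ i, f i) = f j0e * ∏ b, f (pe b) := by
    intro f
    rw [hpart, Finset.prod_insert hj0im,
      Finset.prod_image (fun b _ b' _ h => hpeinj h)]
  choose LF hLF using fun b => colMat_leftinv G θ hdep hA1 (pk b) b.1 (hpk b)
  choose binv hbinv using hinv
  set C : Matrix (({b : Fin K // b ≠ k0} → Fin H) × Fin V)
      ({j // j ∈ insert j0 F} → Fin V) ℝ :=
    Matrix.of fun x r => (if r j0e = x.2 then 1 else 0) *
      ∏ b, LF b (x.1 b) (r (pe b)) with hC
  have hCA : ∀ (x : ({b : Fin K // b ≠ k0} → Fin H) × Fin V) (a : Fin K → Fin H),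
      (C * Amat ν θ (insert j0 F)) x a
      = ν a * (θ j0 a x.2 *
          (if ∀ b : {b : Fin K // b ≠ k0}, a b.1 = x.1 b then 1 else 0)) := by
    intro x a
    rw [Matrix.mul_apply]
    set Φ : {j // j ∈ insert j0 F} → Fin V → ℝ := fun i u =>
      if h : i = j0e then (if u = x.2 then 1 else 0) * θ j0 a u
      else LF (binv i h) (x.1 (binv i h)) u * θ (pk (binv i h)) a u with hΦ
    have h1 : ∀ u, Φ j0e u = (if u = x.2 then 1 else 0) * θ j0 a u := fun u => dif_pos rfl
    have h2 : ∀ b u, Φ (pe b) u = LF b (x.1 b) u * θ (pk b) a u := by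
      intro b u
      have hne : pe b ≠ j0e := hpej0 b
      have hb : binv (pe b) hne = b := hpeinj (hbinv (pe b) hne)
      calc Φ (pe b) u
          = LF (binv (pe b) hne) (x.1 (binv (pe b) hne)) u * θ (pk (binv (pe b) hne)) a u :=
            dif_neg hne
        _ = LF b (x.1 b) u * θ (pk b) a u := by rw [hb]
    have hterm : ∀ r : {j // j ∈ insert j0 F} → Fin V,
        C x r * Amat ν θ (insert j0 F) r a = ν a * ∏ i, Φ i (r i) := by
      intro r
      show ((if r j0e = x.2 then (1:ℝ) else 0) * ∏ b, LF b (x.1 b) (r (pe b))) *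
        (ν a * ∏ i, θ i.1 a (r i)) = ν a * ∏ i, Φ i (r i)
      rw [hsplit (fun i => Φ i (r i)), hsplit (fun i => θ i.1 a (r i))]
      rw [h1 (r j0e), Finset.prod_congr rfl fun b _ => h2 b (r (pe b)),
        Finset.prod_mul_distrib]
      ring
    rw [Finset.sum_congr rfl fun r _ => hterm r, ← Finset.mul_sum,
      sum_prod_pi Φ, hsplit (fun i => ∑ u, Φ i u)]
    have e1 : (∑ u, Φ j0e u) = θ j0 a x.2 := by
      have h8 : ∀ u, Φ j0e u = if u = x.2 then θ j0 a u else 0 := by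
        intro u; rw [h1 u]; split <;> simp
      rw [Finset.sum_congr rfl fun u _ => h8 u,
        Finset.sum_ite_eq' Finset.univ x.2 (θ j0 a)]
      simp
    have e2 : ∀ b, (∑ u, Φ (pe b) u) = if a b.1 = x.1 b then 1 else 0 := by
      intro b
      rw [Finset.sum_congr rfl fun u _ => h2 b u]
      exact hLF b (x.1 b) a
    rw [e1, Finset.prod_congr rfl fun b _ => e2 b,
      prod_boole_real (fun b : {b : Fin K // b ≠ k0} => a b.1 = x.1 b)]
  obtain ⟨astar, hh, hh', hne2⟩ := hA2 j0 k0 hk0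
  let ag : ({b : Fin K // b ≠ k0} → Fin H) → (Fin K → Fin H) :=
    fun g k => if h : k = k0 then hh else g ⟨k, h⟩
  let abar : Fin K → Fin H := fun k => if k = k0 then hh' else astar k
  let gstar : {b : Fin K // b ≠ k0} → Fin H := fun b => astar b.1
  have fag : ∀ g b, ag g b.1 = g b := by
    intro g b
    show (if h : b.1 = k0 then hh else g ⟨b.1, h⟩) = g b
    rw [dif_neg b.2]
  have fabar : ∀ b : {b : Fin K // b ≠ k0}, abar b.1 = astar b.1 := by
    intro b
    show (if b.1 = k0 then hh' else astar b.1) = astar b.1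
    rw [if_neg b.2]
  have f3 : ag gstar = Function.update astar k0 hh := by
    funext k
    by_cases hk : k = k0
    · subst hk
      show (if h : k = k then hh else astar k) = _
      rw [dif_pos rfl, Function.update_self]
    · show (if h : k = k0 then hh else astar k) = _
      rw [dif_neg hk, Function.update_of_ne hk]
  have f4 : abar = Function.update astar k0 hh' := by
    funext k
    by_cases hk : k = k0
    · subst hk
      show (if k = k then hh' else astar k) = _
      rw [if_pos rfl, Function.update_self]
    · show (if k = k0 then hh' else astar k) = _
      rw [if_neg hk, Function.update_of_ne hk]
  let colfun : Option ({b : Fin K // b ≠ k0} → Fin H) → (Fin K → Fin H) :=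
    fun o => Option.elim o abar ag
  have ev_some : ∀ (g g0 : {b : Fin K // b ≠ k0} → Fin H) (v : Fin V),
      (C * Amat ν θ (insert j0 F)) (g0, v) (ag g)
      = if g = g0 then ν (ag g) * θ j0 (ag g) v else 0 := by
    intro g g0 v
    rw [hCA (g0, v) (ag g)]
    have hiff : (∀ b : {b : Fin K // b ≠ k0}, ag g b.1 = g0 b) ↔ g = g0 := by
      constructor
      · intro h; funext b; rw [← fag g b]; exact h b
      · intro h b; rw [fag g b, h]
    by_cases h : g = g0
    · rw [if_pos h, if_pos (hiff.mpr h)]; ring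
    · rw [if_neg h, if_neg (fun hc => h (hiff.mp hc))]; ring
  have ev_none : ∀ (g0 : {b : Fin K // b ≠ k0} → Fin H) (v : Fin V),
      (C * Amat ν θ (insert j0 F)) (g0, v) abar
      = if gstar = g0 then ν abar * θ j0 abar v else 0 := by
    intro g0 v
    rw [hCA (g0, v) abar]
    have hiff : (∀ b : {b : Fin K // b ≠ k0}, abar b.1 = g0 b) ↔ gstar = g0 := by
      constructor
      · intro h; funext b
        show astar b.1 = g0 b
        rw [← fabar b]; exact h b
      · intro h b; rw [fabar b]; exact congrFun h b
    by_cases h : gstar = g0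
    · rw [if_pos h, if_pos (hiff.mpr h)]; ring
    · rw [if_neg h, if_neg (fun hc => h (hiff.mp hc))]; ring
  have hli : LinearIndependent ℝ
      (fun o : Option ({b : Fin K // b ≠ k0} → Fin H) =>
        (fun xx : ({b : Fin K // b ≠ k0} → Fin H) × Fin V =>
          (C * Amat ν θ (insert j0 F)) xx (colfun o))) := by
    rw [Fintype.linearIndependent_iff]
    intro cv hcv
    have hx : ∀ xx : ({b : Fin K // b ≠ k0} → Fin H) × Fin V,
        (∑ o, cv o * (C * Amat ν θ (insert j0 F)) xx (colfun o)) = 0 := by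
      intro xx
      have := congrFun hcv xx
      rw [Finset.sum_apply] at this
      simpa using this
    have hxv : ∀ (g0 : {b : Fin K // b ≠ k0} → Fin H) (v : Fin V),
        cv (some g0) * (ν (ag g0) * θ j0 (ag g0) v)
          + cv none * (if gstar = g0 then ν abar * θ j0 abar v else 0) = 0 := by
      intro g0 v
      have hthis := hx (g0, v)
      rw [Fintype.sum_option] at hthis
      have e3 : ∀ g, cv (some g) * (C * Amat ν θ (insert j0 F)) (g0, v) (colfun (some g))
          = if g = g0 then cv (some g) * (ν (ag g) * θ j0 (ag g) v) else 0 := by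
        intro g
        have h5 : (C * Amat ν θ (insert j0 F)) (g0, v) (colfun (some g))
            = if g = g0 then ν (ag g) * θ j0 (ag g) v else 0 := ev_some g g0 v
        rw [h5, mul_ite, mul_zero]
      rw [Finset.sum_congr rfl (fun g _ => e3 g),
        Finset.sum_ite_eq' Finset.univ g0
          (fun g => cv (some g) * (ν (ag g) * θ j0 (ag g) v)),
        if_pos (Finset.mem_univ g0)] at hthis
      have e4 : (C * Amat ν θ (insert j0 F)) (g0, v) (colfun none)
          = if gstar = g0 then ν abar * θ j0 abar v else 0 := ev_none g0 v
      rw [e4] at hthis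
      linarith [hthis]
    have hsum : ∀ a : Fin K → Fin H, (∑ v, θ j0 a v) = 1 := fun a => (hcpt j0 a).2
    have hzero_some : ∀ g0, g0 ≠ gstar → cv (some g0) = 0 := by
      intro g0 hg0
      have hv : ∀ v : Fin V, cv (some g0) * (ν (ag g0) * θ j0 (ag g0) v) = 0 := by
        intro v
        have := hxv g0 v
        rw [if_neg (fun h => hg0 h.symm), mul_zero, add_zero] at this
        exact this
      have hker : cv (some g0) * ν (ag g0) = 0 := by
        have hz := Finset.sum_congr rfl (fun v (_ : v ∈ Finset.univ) => hv v)
        rw [Finset.sum_const_zero] at hz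
        have h7 : ∀ v : Fin V, cv (some g0) * (ν (ag g0) * θ j0 (ag g0) v)
            = (cv (some g0) * ν (ag g0)) * θ j0 (ag g0) v := fun v => by ring
        rw [Finset.sum_congr rfl fun v _ => h7 v, ← Finset.mul_sum, hsum _, mul_one] at hz
        exact hz
      rcases mul_eq_zero.mp hker with h | h
      · exact h
      · exact absurd h (ne_of_gt (hpos (ag g0)))
    have hstar : ∀ v : Fin V,
        cv (some gstar) * (ν (ag gstar) * θ j0 (ag gstar) v)
          + cv none * (ν abar * θ j0 abar v) = 0 := by
      intro v
      have := hxv gstar v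
      rw [if_pos rfl] at this
      exact this
    have hsum2 : cv (some gstar) * ν (ag gstar) + cv none * ν abar = 0 := by
      have hz := Finset.sum_congr rfl (fun v (_ : v ∈ Finset.univ) => hstar v)
      rw [Finset.sum_const_zero] at hz
      have h7 : ∀ v : Fin V,
          cv (some gstar) * (ν (ag gstar) * θ j0 (ag gstar) v)
            + cv none * (ν abar * θ j0 abar v)
          = (cv (some gstar) * ν (ag gstar)) * θ j0 (ag gstar) v
            + (cv none * ν abar) * θ j0 abar v := fun v => by ring
      rw [Finset.sum_congr rfl fun v _ => h7 v, Finset.sum_add_distrib,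
        ← Finset.mul_sum, ← Finset.mul_sum, hsum _, hsum _, mul_one, mul_one] at hz
      exact hz
    have hcv1 : cv (some gstar) = 0 := by
      by_contra hne0
      have hdiff : ∀ v, cv (some gstar) * ν (ag gstar)
          * (θ j0 (ag gstar) v - θ j0 abar v) = 0 := by
        intro v
        have h1 := hstar v
        have h6 : cv (some gstar) * (ν (ag gstar) * θ j0 (ag gstar) v)
            + cv none * (ν abar * θ j0 abar v)
            = cv (some gstar) * ν (ag gstar) * (θ j0 (ag gstar) v - θ j0 abar v)
              + (cv (some gstar) * ν (ag gstar) + cv none * ν abar) * θ j0 abar v := by ring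
        rw [h6, hsum2, zero_mul, add_zero] at h1
        exact h1
      have hcnz : cv (some gstar) * ν (ag gstar) ≠ 0 :=
        mul_ne_zero hne0 (ne_of_gt (hpos (ag gstar)))
      have heqθ : θ j0 (ag gstar) = θ j0 abar := by
        funext v
        have := hdiff v
        rcases mul_eq_zero.mp this with h | h
        · exact absurd h hcnz
        · linarith [h]
      rw [f3, f4] at heqθ
      exact hne2 heqθ
    have hcv0 : cv none = 0 := by
      have := hsum2
      rw [hcv1, zero_mul, zero_add] at this
      rcases mul_eq_zero.mp this with h | h
      · exact h
      · exact absurd h (ne_of_gt (hpos abar))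
    intro o
    match o with
    | none => exact hcv0
    | some g0 =>
      by_cases hg : g0 = gstar
      · rw [hg]; exact hcv1
      · exact hzero_some g0 hg
  have hcard := card_le_rank_of_linind (C * Amat ν θ (insert j0 F)) colfun hli
  have hcardsub : Fintype.card {b : Fin K // b ≠ k0} = K - 1 := by
    simp [Fintype.card_subtype_compl]
  have hcardo : Fintype.card (Option ({b : Fin K // b ≠ k0} → Fin H))
      = H ^ (K - 1) + 1 := by
    rw [Fintype.card_option, Fintype.card_fun, Fintype.card_fin, hcardsub]
  have hrankle : (C * Amat ν θ (insert j0 F)).rank ≤ (Amat ν θ (insert j0 F)).rank :=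
    Matrix.rank_mul_le_right C (Amat ν θ (insert j0 F))
  omega

end Chunk6
section Chunk7
variable {J K V H : ℕ} [NeZero H]

lemma pure_pick (G : Fin J → Fin K → Bool) (hpure : PureChild G) (k : Fin K)
    (E : Finset (Fin J))
    (hE : ∀ j₁ ∈ E, ∀ j₂ ∈ E, co G j₁ = {k} → co G j₂ = {k} → j₁ = j₂) :
    ∃ j : Fin J, co G j = {k} ∧ j ∉ E := by
  classical
  set P := Finset.univ.filter (fun j => co G j = ({k} : Finset (Fin K))) with hP
  have hP2 : 2 ≤ P.card := hpure.2 k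
  have hPE : (P ∩ E).card ≤ 1 := by
    refine Finset.card_le_one.mpr fun a ha b hb => ?_
    rw [Finset.mem_inter, hP, Finset.mem_filter] at ha hb
    exact hE a ha.2 b hb.2 ha.1.2 hb.1.2
  have hsd : (P \ E).Nonempty := by
    rw [← Finset.card_pos]
    have := Finset.card_sdiff_add_card_inter P E
    omega
  obtain ⟨j, hj⟩ := hsd
  rw [Finset.mem_sdiff, hP, Finset.mem_filter] at hj
  exact ⟨j, hj.1.2, hj.2⟩

/-- observable pairwise predicate -/
noncomputable def Ppred (m : ℕ) {K : ℕ} (ν : (Fin K → Fin H) → ℝ)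
    (θ : Fin J → (Fin K → Fin H) → Fin V → ℝ) (j1 j2 : Fin J) : Prop :=
  ∃ S₂ : Finset (Fin J), Disjoint S₂ ({j1, j2} : Finset (Fin J)) ∧
    (({j1, j2} : Finset (Fin J)) ∪ S₂).card ≤ 2 * m ∧
    H < (unfoldT ν θ ({j1, j2} : Finset (Fin J)) S₂).rank

/-- observable neighborhood predicate -/
noncomputable def Qpred (m : ℕ) {K : ℕ} (ν : (Fin K → Fin H) → ℝ)
    (θ : Fin J → (Fin K → Fin H) → Fin V → ℝ) (j0 : Fin J) (F : Finset (Fin J)) : Prop :=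
  ∀ S₂ : Finset (Fin J), Disjoint S₂ (insert j0 F) →
    ((insert j0 F) ∪ S₂).card ≤ 2 * m →
    (unfoldT ν θ (insert j0 F) S₂).rank ≤ H ^ F.card

lemma Ppred_iff (m : ℕ) (G : Fin J → Fin K → Bool) (ν : (Fin K → Fin H) → ℝ)
    (θ : Fin J → (Fin K → Fin H) → Fin V → ℝ)
    (hdep : DependsOnlyOnCo G θ) (hcpt : IsCPT θ) (hpos : ∀ a, 0 < ν a)
    (hA1 : Assumption1 G θ) (hpr : PairwiseRank G θ) (hpure : PureChild G)
    (hKm : K ≤ m) (hm2 : 2 ≤ m)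
    (j1 j2 : Fin J) (hne : j1 ≠ j2) :
    Ppred m ν θ j1 j2 ↔ ¬ (∃ k : Fin K, co G j1 ∪ co G j2 = {k}) := by
  classical
  constructor
  · rintro ⟨S₂, hd, hcard, hrank⟩ ⟨k, hk⟩
    have hsub : ∀ j ∈ ({j1, j2} : Finset (Fin J)), co G j ⊆ ({k} : Finset (Fin K)) := by
      intro j hj
      rcases Finset.mem_insert.mp hj with h | h
      · subst h; rw [← hk]; exact Finset.subset_union_left
      · rw [Finset.mem_singleton.mp h, ← hk]; exact Finset.subset_union_right
    have := rank_le_of_co_subset G ν θ hdep hcpt ({j1, j2} : Finset (Fin J)) S₂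
      hd.symm ({k} : Finset (Fin K)) hsub
    rw [Finset.card_singleton, pow_one] at this
    omega
  · intro hns
    have hpick : ∀ k : Fin K, ∃ j : Fin J, co G j = {k} ∧ j ∉ ({j1, j2} : Finset (Fin J)) := by
      intro k
      refine pure_pick G hpure k _ fun a ha b hb hca hcb => ?_
      rcases Finset.mem_insert.mp ha with h | h <;>
        rcases Finset.mem_insert.mp hb with h' | h'
      · rw [h, h']
      · exfalso
        refine hns ⟨k, ?_⟩
        rw [h] at hca
        rw [Finset.mem_singleton.mp h'] at hcb
        rw [hca, hcb, Finset.union_self]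
      · exfalso
        refine hns ⟨k, ?_⟩
        rw [Finset.mem_singleton.mp h] at hca
        rw [h'] at hcb
        rw [hcb, hca, Finset.union_self]
      · rw [Finset.mem_singleton.mp h, Finset.mem_singleton.mp h']
    choose q hq hqE using hpick
    refine ⟨Finset.image q Finset.univ, ?_, ?_, ?_⟩
    · rw [Finset.disjoint_left]
      intro a ha
      obtain ⟨k, -, hk⟩ := Finset.mem_image.mp ha
      rw [← hk]
      exact hqE k
    · refine le_trans (Finset.card_union_le _ _) ?_
      have h1 : ({j1, j2} : Finset (Fin J)).card ≤ 2 :=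
        le_trans (Finset.card_insert_le j1 {j2}) (by rw [Finset.card_singleton])
      have h2 : (Finset.image q Finset.univ).card ≤ K := by
        refine le_trans (Finset.card_image_le) ?_
        rw [Finset.card_univ, Fintype.card_fin]
      omega
    · refine pair_lower G ν θ hdep hcpt hpos hA1 hpr j1 j2 hne hns q hq ?_
      rw [Finset.disjoint_right]
      intro a ha
      obtain ⟨k, -, hk⟩ := Finset.mem_image.mp ha
      rw [← hk]
      exact hqE k

lemma Qpred_iff (m : ℕ) (G : Fin J → Fin K → Bool) (ν : (Fin K → Fin H) → ℝ)
    (θ : Fin J → (Fin K → Fin H) → Fin V → ℝ)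
    (hdep : DependsOnlyOnCo G θ) (hcpt : IsCPT θ) (hpos : ∀ a, 0 < ν a)
    (hA1 : Assumption1 G θ) (hA2 : Assumption2 G θ) (hpure : PureChild G)
    (hKm : K ≤ m)
    (j0 : Fin J) (k0 : Fin K) (F : Finset (Fin J)) (hj0F : j0 ∉ F)
    (hFcard : F.card = K - 1)
    (pk : {b : Fin K // b ≠ k0} → Fin J) (hpk : ∀ b, co G (pk b) = {b.1})
    (hpkF : ∀ b, pk b ∈ F) (hFonly : ∀ j ∈ F, ∃ b, pk b = j) :
    Qpred m ν θ j0 F ↔ k0 ∉ co G j0 := by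
  classical
  constructor
  · -- if Qpred holds then k0 is not a parent of j0
    intro hQ
    by_contra hk0
    -- construct one pure child per latent avoiding insert j0 F
    have hpick : ∀ k : Fin K, ∃ j : Fin J, co G j = {k} ∧ j ∉ insert j0 F := by
      intro k
      refine pure_pick G hpure k _ fun a ha b hb hca hcb => ?_
      have key : ∀ c ∈ insert j0 F, co G c = {k} → ∀ d ∈ insert j0 F, co G d = {k} → c = d := by
        intro c hc hcc d hd hcd
        rcases Finset.mem_insert.mp hc with h | h <;>
          rcases Finset.mem_insert.mp hd with h' | h'
        · rw [h, h']
        · -- c = j0, d ∈ F : impossible since co j0 ∋ k0 but co d = {b ≠ k0}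
          exfalso
          obtain ⟨b, hb'⟩ := hFonly d h'
          rw [← hb', hpk b] at hcd
          have hbk : b.1 = k := Finset.singleton_injective hcd
          rw [h] at hcc
          have : k0 ∈ ({k} : Finset (Fin K)) := hcc ▸ hk0
          rw [Finset.mem_singleton] at this
          exact b.2 (by rw [hbk, ← this])
        · exfalso
          obtain ⟨b, hb'⟩ := hFonly c h
          rw [← hb', hpk b] at hcc
          have hbk : b.1 = k := Finset.singleton_injective hcc
          rw [h'] at hcd
          have : k0 ∈ ({k} : Finset (Fin K)) := hcd ▸ hk0
          rw [Finset.mem_singleton] at this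
          exact b.2 (by rw [hbk, ← this])
        · obtain ⟨b, hb'⟩ := hFonly c h
          obtain ⟨b', hb''⟩ := hFonly d h'
          rw [← hb', hpk b] at hcc
          rw [← hb'', hpk b'] at hcd
          rw [← hb', ← hb'']
          congr 1
          exact Subtype.ext ((Finset.singleton_injective hcc).trans
            (Finset.singleton_injective hcd).symm)
      exact key a ha hca b hb hcb
    choose q hq hqE using hpick
    have hdisj : Disjoint (Finset.image q Finset.univ) (insert j0 F) := by
      rw [Finset.disjoint_left]
      intro a ha
      obtain ⟨k, -, hk⟩ := Finset.mem_image.mp ha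
      rw [← hk]
      exact hqE k
    have hcard : ((insert j0 F) ∪ Finset.image q Finset.univ).card ≤ 2 * m := by
      refine le_trans (Finset.card_union_le _ _) ?_
      have h1 : (insert j0 F).card ≤ 1 + (K - 1) := by
        refine le_trans (Finset.card_insert_le j0 F) ?_
        omega
      have h2 : (Finset.image q Finset.univ).card ≤ K := by
        refine le_trans (Finset.card_image_le) ?_
        rw [Finset.card_univ, Fintype.card_fin]
      have hK1 : 1 ≤ K := by
        by_contra hc
        push_neg at hc
        interval_cases K
        exact absurd (Finset.mem_univ k0) (by exact (Fin.elim0 k0))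
      omega
    have hup := hQ (Finset.image q Finset.univ) hdisj hcard
    have hlow1 := graph_lower G ν θ hdep hcpt hpos hA1 hA2 j0 k0 hk0 pk hpk F hpkF hFonly hj0F
    have hlow2 := rank_Amat_le_unfoldT G ν θ hdep hcpt hA1 (insert j0 F) q hq hdisj.symm
    rw [hFcard] at hup
    omega
  · -- if k0 is not a parent then Qpred holds
    intro hk0 S₂ hd hcard
    have hsub : ∀ j ∈ insert j0 F, co G j ⊆ Finset.univ.erase k0 := by
      intro j hj
      rcases Finset.mem_insert.mp hj with h | h
      · subst h
        intro k hk
        exact Finset.mem_erase.mpr ⟨fun hc => hk0 (hc ▸ hk), Finset.mem_univ k⟩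
      · obtain ⟨b, hb⟩ := hFonly j h
        rw [← hb, hpk b]
        intro k hk
        rw [Finset.mem_singleton.mp hk]
        exact Finset.mem_erase.mpr ⟨b.2, Finset.mem_univ b.1⟩
    have := rank_le_of_co_subset G ν θ hdep hcpt (insert j0 F) S₂ hd.symm
      (Finset.univ.erase k0) hsub
    rw [Finset.card_erase_of_mem (Finset.mem_univ k0), Finset.card_univ,
      Fintype.card_fin, ← hFcard] at this
    exact this

end Chunk7

/-- Corollary 1: the number of latent variables and the graph are
identifiable from the marginal distributions of all subsets of `2·max(K,K')`
observed variables. -/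
theorem graph_identifiable_from_marginals
    {J K K' V H : ℕ} [NeZero H] (hH : 2 ≤ H) (hVH : H ≤ V)
    (hK : 2 ≤ K) (hK' : 2 ≤ K') (hJ : 2 * max K K' ≤ J)
    (G : Fin J → Fin K → Bool) (G' : Fin J → Fin K' → Bool)
    (ν : (Fin K → Fin H) → ℝ) (θ : Fin J → (Fin K → Fin H) → Fin V → ℝ)
    (ν' : (Fin K' → Fin H) → ℝ) (θ' : Fin J → (Fin K' → Fin H) → Fin V → ℝ)
    (hdep : DependsOnlyOnCo G θ) (hcpt : IsCPT θ) (hpmf : IsPMF ν)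
    (hpos : ∀ a, 0 < ν a)
    (hA1 : Assumption1 G θ) (hA2 : Assumption2 G θ)
    (hpure : PureChild G) (hpr : PairwiseRank G θ)
    (hdep' : DependsOnlyOnCo G' θ') (hcpt' : IsCPT θ') (hpmf' : IsPMF ν')
    (hpos' : ∀ a, 0 < ν' a)
    (hA1' : Assumption1 G' θ') (hA2' : Assumption2 G' θ')
    (hpure' : PureChild G') (hpr' : PairwiseRank G' θ')
    (heq : ∀ S : Finset (Fin J), S.card = 2 * max K K' →
      marginalP ν θ S = marginalP ν' θ' S) :
    K = K' ∧ ∃ e : Fin K ≃ Fin K', ∀ (j : Fin J) (k : Fin K), G' j (e k) = G j k := by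
  classical
  have hKm : K ≤ max K K' := le_max_left K K'
  have hK'm : K' ≤ max K K' := le_max_right K K'
  have hm2 : 2 ≤ max K K' := le_trans hK hKm
  have hV0 : 0 < V := by omega
  let v0 : Fin V := ⟨0, hV0⟩
  -- transfer of low-order marginals
  have hmmkey : ∀ n : ℕ, ∀ S : Finset (Fin J), ∀ r : Fin J → Fin V,
      S.card + n = 2 * max K K' → mm ν θ S r = mm ν' θ' S r := by
    intro n
    induction n with
    | zero =>
      intro S r hc
      rw [Nat.add_zero] at hc
      rw [mm_eq_marginal ν θ hcpt S r, mm_eq_marginal ν' θ' hcpt' S r]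
      exact congrFun (heq S hc) _
    | succ n ih =>
      intro S r hc
      have hlt : S.card < J := by omega
      have hex : ∃ j : Fin J, j ∉ S := by
        by_contra hcon
        push_neg at hcon
        have : S = Finset.univ := Finset.eq_univ_iff_forall.mpr hcon
        rw [this, Finset.card_univ, Fintype.card_fin] at hlt
        omega
      obtain ⟨j, hj⟩ := hex
      rw [← mm_insert_sum ν θ hcpt S j hj r, ← mm_insert_sum ν' θ' hcpt' S j hj r]
      refine Finset.sum_congr rfl fun v _ => ?_
      refine ih (insert j S) (Function.update r j v) ?_
      rw [Finset.card_insert_of_notMem hj]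
      omega
  have hmm : ∀ S : Finset (Fin J), S.card ≤ 2 * max K K' →
      ∀ r, mm ν θ S r = mm ν' θ' S r := fun S hS r =>
    hmmkey (2 * max K K' - S.card) S r (by omega)
  have hU : ∀ S₁ S₂ : Finset (Fin J), Disjoint S₁ S₂ → (S₁ ∪ S₂).card ≤ 2 * max K K' →
      unfoldT ν θ S₁ S₂ = unfoldT ν' θ' S₁ S₂ := by
    intro S₁ S₂ hd hc
    ext r c
    rw [unfoldT_eq_mm ν θ hcpt S₁ S₂ hd v0 r c, unfoldT_eq_mm ν' θ' hcpt' S₁ S₂ hd v0 r c]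
    exact hmm _ hc _
  -- predicate transfers
  have hPiff : ∀ j1 j2 : Fin J, Ppred (max K K') ν θ j1 j2 ↔ Ppred (max K K') ν' θ' j1 j2 := by
    intro j1 j2
    unfold Ppred
    constructor <;> rintro ⟨S₂, hd, hc, hr⟩ <;> refine ⟨S₂, hd, hc, ?_⟩
    · rwa [← hU _ S₂ hd.symm hc]
    · rwa [hU _ S₂ hd.symm hc]
  have hQiff : ∀ (j0 : Fin J) (F : Finset (Fin J)),
      Qpred (max K K') ν θ j0 F ↔ Qpred (max K K') ν' θ' j0 F := by
    intro j0 F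
    unfold Qpred
    constructor <;> intro h S₂ hd hc
    · rw [← hU _ S₂ hd.symm hc]; exact h S₂ hd hc
    · rw [hU _ S₂ hd.symm hc]; exact h S₂ hd hc
  -- pure-child transfer, model 1 → model 2
  have samePureTo : ∀ x y : Fin J, x ≠ y → (∃ k : Fin K, co G x = {k} ∧ co G y = {k}) →
      ∃ k' : Fin K', co G' x = {k'} ∧ co G' y = {k'} := by
    rintro x y hxy ⟨k, hx, hy⟩
    have h1 : ¬ Ppred (max K K') ν θ x y := fun hP =>
      (Ppred_iff (max K K') G ν θ hdep hcpt hpos hA1 hpr hpure hKm hm2 x y hxy).mp hP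
        ⟨k, by rw [hx, hy, Finset.union_self]⟩
    have h2 : ¬ Ppred (max K K') ν' θ' x y := fun hP => h1 ((hPiff x y).mpr hP)
    have h4 : ∃ k', co G' x ∪ co G' y = {k'} := not_not.mp (fun hc =>
      h2 ((Ppred_iff (max K K') G' ν' θ' hdep' hcpt' hpos' hA1' hpr' hpure'
        hK'm hm2 x y hxy).mpr hc))
    obtain ⟨k', hk'⟩ := h4
    have hxs : co G' x ⊆ {k'} := hk' ▸ Finset.subset_union_left
    have hys : co G' y ⊆ {k'} := hk' ▸ Finset.subset_union_right
    refine ⟨k', ?_, ?_⟩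
    · rcases Finset.subset_singleton_iff.mp hxs with h | h
      · exact absurd (h ▸ hpure'.1 x) (by simp)
      · exact h
    · rcases Finset.subset_singleton_iff.mp hys with h | h
      · exact absurd (h ▸ hpure'.1 y) (by simp)
      · exact h
  -- pure-child transfer, model 2 → model 1
  have samePureFrom : ∀ x y : Fin J, x ≠ y →
      (∃ k' : Fin K', co G' x = {k'} ∧ co G' y = {k'}) →
      ∃ k : Fin K, co G x = {k} ∧ co G y = {k} := by
    rintro x y hxy ⟨k', hx, hy⟩
    have h1 : ¬ Ppred (max K K') ν' θ' x y := fun hP =>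
      (Ppred_iff (max K K') G' ν' θ' hdep' hcpt' hpos' hA1' hpr' hpure' hK'm hm2 x y hxy).mp hP
        ⟨k', by rw [hx, hy, Finset.union_self]⟩
    have h2 : ¬ Ppred (max K K') ν θ x y := fun hP => h1 ((hPiff x y).mp hP)
    have h4 : ∃ k, co G x ∪ co G y = {k} := not_not.mp (fun hc =>
      h2 ((Ppred_iff (max K K') G ν θ hdep hcpt hpos hA1 hpr hpure
        hKm hm2 x y hxy).mpr hc))
    obtain ⟨k, hk⟩ := h4
    have hxs : co G x ⊆ {k} := hk ▸ Finset.subset_union_left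
    have hys : co G y ⊆ {k} := hk ▸ Finset.subset_union_right
    refine ⟨k, ?_, ?_⟩
    · rcases Finset.subset_singleton_iff.mp hxs with h | h
      · exact absurd (h ▸ hpure.1 x) (by simp)
      · exact h
    · rcases Finset.subset_singleton_iff.mp hys with h | h
      · exact absurd (h ▸ hpure.1 y) (by simp)
      · exact h
  -- pure children of model 1
  have hp : ∀ k : Fin K, ∃ j, co G j = {k} ∧ j ∉ (∅ : Finset (Fin J)) := fun k =>
    pure_pick G hpure k ∅ (fun a ha => absurd ha (Finset.notMem_empty a))
  choose p hp1 _ using hp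
  have hq : ∀ k : Fin K, ∃ j, co G j = {k} ∧ j ∉ ({p k} : Finset (Fin J)) := fun k =>
    pure_pick G hpure k {p k} (fun a ha b hb _ _ => by
      rw [Finset.mem_singleton.mp ha, Finset.mem_singleton.mp hb])
  choose q hq1 hq2 using hq
  have hpq : ∀ k, p k ≠ q k := fun k h =>
    (hq2 k) (by rw [← h]; exact Finset.mem_singleton_self _)
  -- define e
  have he0 : ∀ k : Fin K, ∃ k', co G' (p k) = {k'} ∧ co G' (q k) = {k'} := fun k =>
    samePureTo (p k) (q k) (hpq k) ⟨k, hp1 k, hq1 k⟩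
  choose e he1 _ using he0
  have hpe' : ∀ (k : Fin K) (x : Fin J), co G x = {k} → co G' x = {e k} := by
    intro k x hx
    by_cases hxp : x = p k
    · rw [hxp]; exact he1 k
    · obtain ⟨k'', h1, h2⟩ := samePureTo x (p k) hxp ⟨k, hx, hp1 k⟩
      rw [h1]
      exact h2.symm.trans (he1 k)
  -- pure children of model 2
  have hp' : ∀ k' : Fin K', ∃ j, co G' j = {k'} ∧ j ∉ (∅ : Finset (Fin J)) := fun k' =>
    pure_pick G' hpure' k' ∅ (fun a ha => absurd ha (Finset.notMem_empty a))
  choose p' hp'1 _ using hp'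
  have hq' : ∀ k' : Fin K', ∃ j, co G' j = {k'} ∧ j ∉ ({p' k'} : Finset (Fin J)) := fun k' =>
    pure_pick G' hpure' k' {p' k'} (fun a ha b hb _ _ => by
      rw [Finset.mem_singleton.mp ha, Finset.mem_singleton.mp hb])
  choose q' hq'1 hq'2 using hq'
  have hp'q' : ∀ k', p' k' ≠ q' k' := fun k' h =>
    (hq'2 k') (by rw [← h]; exact Finset.mem_singleton_self _)
  have hf0 : ∀ k' : Fin K', ∃ k, co G (p' k') = {k} ∧ co G (q' k') = {k} := fun k' =>
    samePureFrom (p' k') (q' k') (hp'q' k') ⟨k', hp'1 k', hq'1 k'⟩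
  choose f hf1 _ using hf0
  -- e is bijective
  have hbij : Function.Bijective e := by
    constructor
    · intro k1 k2 h
      by_cases hpp : p k1 = p k2
      · have : ({k1} : Finset (Fin K)) = {k2} := by
          rw [← hp1 k1, ← hp1 k2, hpp]
        exact Finset.singleton_injective this
      · obtain ⟨k0, hA, hB⟩ := samePureFrom (p k1) (p k2) hpp
          ⟨e k1, he1 k1, by rw [he1 k2, ← h]⟩
        have e1 : ({k1} : Finset (Fin K)) = {k0} := by rw [← hp1 k1, hA]
        have e2 : ({k2} : Finset (Fin K)) = {k0} := by rw [← hp1 k2, hB]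
        exact Finset.singleton_injective (e1.trans e2.symm)
    · intro k'
      refine ⟨f k', ?_⟩
      have h5 := hpe' (f k') (p' k') (hf1 k')
      have h6 : ({k'} : Finset (Fin K')) = {e (f k')} := by rw [← hp'1 k', h5]
      exact (Finset.singleton_injective h6).symm
  have hKK' : K = K' := by
    have := Fintype.card_of_bijective hbij
    rwa [Fintype.card_fin, Fintype.card_fin] at this
  refine ⟨hKK', Equiv.ofBijective e hbij, ?_⟩
  intro j k
  -- pure children avoiding j
  have hfj : ∀ b : Fin K, ∃ x, co G x = {b} ∧ x ∉ ({j} : Finset (Fin J)) := fun b =>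
    pure_pick G hpure b {j} (fun a ha b' hb' _ _ => by
      rw [Finset.mem_singleton.mp ha, Finset.mem_singleton.mp hb'])
  choose fj hfj1 hfj2 using hfj
  have hfjne : ∀ b, fj b ≠ j := fun b h =>
    hfj2 b (by rw [h]; exact Finset.mem_singleton_self j)
  have hfjinj : Function.Injective fj := by
    intro b1 b2 h
    have : ({b1} : Finset (Fin K)) = {b2} := by rw [← hfj1 b1, ← hfj1 b2, h]
    exact Finset.singleton_injective this
  set F := Finset.image fj (Finset.univ.erase k) with hF
  have hjF : j ∉ F := by
    intro hjm
    obtain ⟨x, -, hx⟩ := Finset.mem_image.mp hjm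
    exact hfjne x hx
  have hFcard : F.card = K - 1 := by
    rw [hF, Finset.card_image_of_injective _ hfjinj,
      Finset.card_erase_of_mem (Finset.mem_univ k), Finset.card_univ, Fintype.card_fin]
  let pk : {b : Fin K // b ≠ k} → Fin J := fun b => fj b.1
  have hpk : ∀ b : {b : Fin K // b ≠ k}, co G (pk b) = {b.1} := fun b => hfj1 b.1
  have hpkF : ∀ b : {b : Fin K // b ≠ k}, pk b ∈ F := fun b =>
    Finset.mem_image_of_mem fj (Finset.mem_erase.mpr ⟨b.2, Finset.mem_univ b.1⟩)
  have hFonly : ∀ x ∈ F, ∃ b : {b : Fin K // b ≠ k}, pk b = x := by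
    intro x hx
    obtain ⟨b0, hb0, hb0x⟩ := Finset.mem_image.mp hx
    exact ⟨⟨b0, (Finset.mem_erase.mp hb0).1⟩, hb0x⟩
  have hc1 := Qpred_iff (max K K') G ν θ hdep hcpt hpos hA1 hA2 hpure hKm
    j k F hjF hFcard pk hpk hpkF hFonly
  -- transported pure-children family for model 2
  let ee : Fin K ≃ Fin K' := Equiv.ofBijective e hbij
  let pk' : {b' : Fin K' // b' ≠ e k} → Fin J := fun b' => fj (ee.symm b'.1)
  have hsymmne : ∀ b' : {b' : Fin K' // b' ≠ e k}, ee.symm b'.1 ≠ k := by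
    intro b' hcon
    have := congrArg ee hcon
    rw [Equiv.apply_symm_apply] at this
    exact b'.2 this
  have hpk' : ∀ b' : {b' : Fin K' // b' ≠ e k}, co G' (pk' b') = {b'.1} := by
    intro b'
    have h7 := hpe' (ee.symm b'.1) (fj (ee.symm b'.1)) (hfj1 _)
    have h8 : e (ee.symm b'.1) = b'.1 := ee.apply_symm_apply b'.1
    rwa [h8] at h7
  have hpkF' : ∀ b' : {b' : Fin K' // b' ≠ e k}, pk' b' ∈ F := fun b' =>
    Finset.mem_image_of_mem fj (Finset.mem_erase.mpr ⟨hsymmne b', Finset.mem_univ _⟩)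
  have hFonly' : ∀ x ∈ F, ∃ b' : {b' : Fin K' // b' ≠ e k}, pk' b' = x := by
    intro x hx
    obtain ⟨b0, hb0, hb0x⟩ := Finset.mem_image.mp hx
    have hb0k : b0 ≠ k := (Finset.mem_erase.mp hb0).1
    refine ⟨⟨ee b0, fun hc => hb0k (ee.injective hc)⟩, ?_⟩
    show fj (ee.symm (ee b0)) = x
    rw [ee.symm_apply_apply]
    exact hb0x
  have hFcard' : F.card = K' - 1 := by rw [hFcard, hKK']
  have hc2 := Qpred_iff (max K K') G' ν' θ' hdep' hcpt' hpos' hA1' hA2' hpure' hK'm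
    j (e k) F hjF hFcard' pk' hpk' hpkF' hFonly'
  have hnotiff : (k ∉ co G j) ↔ ((e k) ∉ co G' j) :=
    hc1.symm.trans ((hQiff j F).trans hc2)
  have hfinal : (k ∈ co G j) ↔ ((e k) ∈ co G' j) := not_iff_not.mp hnotiff
  have hmem1 : (G j k = true) ↔ (G' j (e k) = true) := by
    have hco1 : k ∈ co G j ↔ G j k = true := by simp [co]
    have hco2 : (e k) ∈ co G' j ↔ G' j (e k) = true := by simp [co]
    exact hco1.symm.trans (hfinal.trans hco2)
  show G' j (e k) = G j k
  by_cases hb : G j k = true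
  · rw [hb, hmem1.mp hb]
  · have h2 : ¬ G' j (e k) = true := fun hc => hb (hmem1.mpr hc)
    rw [Bool.not_eq_true] at hb h2
    rw [hb, h2]

end LBGM
end
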